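/- arXiv:1508.07908 — 7 statements merged into one kernel-verified Lean document; each statement's English description precedes it below -/
import Mathlib

section
/- Let δ > 1 and R > 0 be real numbers, and let f : [R,∞) → ℝ be measurable with ∫_R^∞ f(t)² t^δ dt < ∞. Then for every r ≥ R the integral g(r) := ∫_r^∞ f(t) dt converges absolutely, and ∫_R^∞ g(r)² r^{δ−2} dr ≤ (2/(δ−1))² · ∫_R^∞ f(t)² t^δ dt. (Consequently the operator S f = −g satisfies (Sf)' = f and is bounded from L²_δ([R,∞)) to L²_{δ−2}([R,∞)) with norm at most 2/|δ−1|.) -/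
open MeasureTheory Set ENNReal

lemma aux_integrable (δ R : ℝ) (f : ℝ → ℝ) (hδ : 1 < δ) (hR : 0 < R)
    (hf : Measurable f)
    (hint : IntegrableOn (fun t => f t ^ 2 * t ^ δ) (Ici R)) :
    ∀ r, R ≤ r → IntegrableOn f (Ici r) := by
  intro r hr
  have hr0 : 0 < r := hR.trans_le hr
  have hbig : IntegrableOn (fun t => (f t ^ 2 * t ^ δ + t ^ (-δ)) / 2) (Ici r) := by
    apply Integrable.div_const
    apply Integrable.add
    · exact hint.mono_set (Ici_subset_Ici.2 hr)
    · rw [← restrict_Ioi_eq_restrict_Ici]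
      exact integrableOn_Ioi_rpow_of_lt (by linarith) hr0
  refine hbig.mono' (hf.aestronglyMeasurable) ?_
  filter_upwards [ae_restrict_mem measurableSet_Ici] with t ht
  have ht0 : 0 < t := hr0.trans_le ht
  have key : |f t| * t ^ (δ/2) * t ^ (-(δ/2)) = |f t| := by
    rw [mul_assoc, ← Real.rpow_add ht0]
    simp
  have h2 : 2 * (|f t| * t ^ (δ/2)) * t ^ (-(δ/2)) ≤
      (|f t| * t ^ (δ/2)) ^ 2 + (t ^ (-(δ/2))) ^ 2 := two_mul_le_add_sq _ _
  have e1 : (|f t| * t ^ (δ/2)) ^ 2 = f t ^ 2 * t ^ δ := by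
    rw [mul_pow, sq_abs, ← Real.rpow_natCast (t ^ (δ/2)) 2, ← Real.rpow_mul ht0.le]
    norm_num
  have e2 : (t ^ (-(δ/2)) : ℝ) ^ 2 = t ^ (-δ) := by
    rw [← Real.rpow_natCast (t ^ (-(δ/2))) 2, ← Real.rpow_mul ht0.le]
    norm_num
  rw [e1, e2] at h2
  rw [Real.norm_eq_abs]
  nlinarith [key]

lemma aux_cs (δ α : ℝ) (f : ℝ → ℝ) (hα : 0 < α) (hαδ : α - δ < -1) {r : ℝ} (hr0 : 0 < r)
    (hf : Measurable f) (hfi : IntegrableOn f (Ici r)) :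
    ENNReal.ofReal ((∫ t in Ici r, f t) ^ 2) ≤
      (∫⁻ t in Ici r, ENNReal.ofReal (f t ^ 2 * t ^ (δ - α))) *
        ENNReal.ofReal (r ^ (α - δ + 1) / (δ - α - 1)) := by
  set β := (δ - α) / 2 with hβ
  set A : ℝ → ℝ≥0∞ := fun t => ENNReal.ofReal (|f t| * t ^ β) with hA
  set B : ℝ → ℝ≥0∞ := fun t => ENNReal.ofReal (t ^ (-β)) with hB
  have hmA : Measurable A := ((hf.abs.mul (by measurability))).ennreal_ofReal
  have hmB : Measurable B := (by measurability : Measurable fun t : ℝ => t ^ (-β)).ennreal_ofReal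
  -- step: |g| bound
  have h1 : ENNReal.ofReal ((∫ t in Ici r, f t) ^ 2) = (ENNReal.ofReal |∫ t in Ici r, f t|) ^ 2 := by
    rw [← ENNReal.ofReal_pow (abs_nonneg _), sq_abs]
  have h2 : ENNReal.ofReal |∫ t in Ici r, f t| ≤ ∫⁻ t in Ici r, ENNReal.ofReal |f t| := by
    calc ENNReal.ofReal |∫ t in Ici r, f t| ≤ ENNReal.ofReal (∫ t in Ici r, |f t|) := by
          apply ENNReal.ofReal_le_ofReal
          simpa using norm_integral_le_integral_norm (μ := volume.restrict (Ici r)) f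
      _ = ∫⁻ t in Ici r, ENNReal.ofReal |f t| :=
          ofReal_integral_eq_lintegral_ofReal hfi.abs (ae_of_all _ fun t => abs_nonneg _)
  have hsplit : (∫⁻ t in Ici r, ENNReal.ofReal |f t|) = ∫⁻ t in Ici r, (A * B) t := by
    apply lintegral_congr_ae
    filter_upwards [ae_restrict_mem measurableSet_Ici] with t ht
    have ht0 : 0 < t := hr0.trans_le ht
    simp only [hA, hB, Pi.mul_apply]
    rw [← ENNReal.ofReal_mul (by positivity), mul_assoc, ← Real.rpow_add ht0]
    simp
  have hpq : Real.HolderConjugate 2 2 := Real.holderConjugate_iff.mpr ⟨one_lt_two, by norm_num⟩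
  have hold := ENNReal.lintegral_mul_le_Lp_mul_Lq (volume.restrict (Ici r)) hpq
    hmA.aemeasurable hmB.aemeasurable
  -- compute ∫⁻ A^2
  have hA2 : (∫⁻ t in Ici r, A t ^ (2:ℝ)) = ∫⁻ t in Ici r, ENNReal.ofReal (f t ^ 2 * t ^ (δ - α)) := by
    apply lintegral_congr_ae
    filter_upwards [ae_restrict_mem measurableSet_Ici] with t ht
    have ht0 : 0 < t := hr0.trans_le ht
    have hAe : A t = ENNReal.ofReal (|f t| * t ^ β) := rfl
    rw [hAe, ENNReal.ofReal_rpow_of_nonneg (by positivity) (by norm_num)]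
    congr 1
    rw [Real.mul_rpow (abs_nonneg _) (Real.rpow_nonneg ht0.le _), ← Real.rpow_mul ht0.le,
      show (2:ℝ) = ((2:ℕ):ℝ) from by norm_num, Real.rpow_natCast, sq_abs]
    rw [hβ]; ring_nf
  -- compute ∫⁻ B^2
  have hB2 : (∫⁻ t in Ici r, B t ^ (2:ℝ)) = ENNReal.ofReal (r ^ (α - δ + 1) / (δ - α - 1)) := by
    have e1 : (∫⁻ t in Ici r, B t ^ (2:ℝ)) = ∫⁻ t in Ici r, ENNReal.ofReal (t ^ (α - δ)) := by
      apply lintegral_congr_ae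
      filter_upwards [ae_restrict_mem measurableSet_Ici] with t ht
      have ht0 : 0 < t := hr0.trans_le ht
      have hBe : B t = ENNReal.ofReal (t ^ (-β)) := rfl
      rw [hBe, ENNReal.ofReal_rpow_of_nonneg (Real.rpow_nonneg ht0.le _) (by norm_num),
        ← Real.rpow_mul ht0.le]
      congr 1
      rw [hβ]; ring_nf
    rw [e1, ← restrict_Ioi_eq_restrict_Ici,
      ← ofReal_integral_eq_lintegral_ofReal (integrableOn_Ioi_rpow_of_lt hαδ hr0)]
    · rw [integral_Ioi_rpow_of_lt hαδ hr0]
      congr 1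
      rw [neg_div, ← div_neg]
      ring_nf
    · filter_upwards [ae_restrict_mem measurableSet_Ioi] with t ht
      exact Real.rpow_nonneg (le_of_lt (lt_trans hr0 ht)) _
  rw [hA2, hB2] at hold
  rw [h1]
  calc (ENNReal.ofReal |∫ t in Ici r, f t|) ^ 2
      ≤ (∫⁻ t in Ici r, (A * B) t) ^ 2 := by
        gcongr
        rw [← hsplit]; exact h2
    _ ≤ ((∫⁻ t in Ici r, ENNReal.ofReal (f t ^ 2 * t ^ (δ - α))) ^ (1/2:ℝ) *
          ENNReal.ofReal (r ^ (α - δ + 1) / (δ - α - 1)) ^ (1/2:ℝ)) ^ 2 := by gcongr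
    _ = (∫⁻ t in Ici r, ENNReal.ofReal (f t ^ 2 * t ^ (δ - α))) *
          ENNReal.ofReal (r ^ (α - δ + 1) / (δ - α - 1)) := by
        rw [mul_pow, ← ENNReal.rpow_natCast (_ ^ (1/2:ℝ)) 2, ← ENNReal.rpow_natCast (ENNReal.ofReal _ ^ (1/2:ℝ)) 2,
          ← ENNReal.rpow_mul, ← ENNReal.rpow_mul]
        norm_num

theorem stmt_0 (δ R : ℝ) (hδ : 1 < δ) (hR : 0 < R) (f : ℝ → ℝ)
    (hf : Measurable f)
    (hint : IntegrableOn (fun t => f t ^ 2 * t ^ δ) (Ici R)) :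
    (∀ r, R ≤ r → IntegrableOn f (Ici r)) ∧
      (∫ r in Ici R, (∫ t in Ici r, f t) ^ 2 * r ^ (δ - 2)) ≤
        (2 / (δ - 1)) ^ 2 * ∫ t in Ici R, f t ^ 2 * t ^ δ := by
  have hfi := aux_integrable δ R f hδ hR hf hint
  refine ⟨hfi, ?_⟩
  have hmr : ∀ s : ℝ, Measurable fun r : ℝ => r ^ s := fun s => by measurability
  set α : ℝ := (δ - 1) / 2 with hαdef
  have hα : 0 < α := by rw [hαdef]; linarith
  have hαδ : α - δ < -1 := by rw [hαdef]; linarith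
  set Fα : ℝ → ℝ≥0∞ := fun t => ENNReal.ofReal (f t ^ 2 * t ^ (δ - α)) with hFα
  set F : ℝ → ℝ≥0∞ := fun t => ENNReal.ofReal (f t ^ 2 * t ^ δ) with hFdef
  have hmFα : Measurable Fα := ((hf.pow_const 2).mul (hmr _)).ennreal_ofReal
  have hmF : Measurable F := ((hf.pow_const 2).mul (hmr _)).ennreal_ofReal
  set I : ℝ≥0∞ := ∫⁻ t in Ici R, F t with hIdef
  have hIfin : I ≠ ⊤ := by
    refine ne_of_lt (lt_of_le_of_lt ?_ hint.2)
    exact lintegral_mono fun t => Real.ofReal_le_enorm _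
  have hgm : StronglyMeasurable fun r : ℝ => ∫ t in Ici r, f t := by
    have h1 : StronglyMeasurable fun p : ℝ × ℝ => if p.1 ≤ p.2 then f p.2 else 0 :=
      (Measurable.ite (measurableSet_le measurable_fst measurable_snd)
        (hf.comp measurable_snd) measurable_const).stronglyMeasurable
    have h2 := h1.integral_prod_right' (ν := volume)
    have he : (fun r : ℝ => ∫ t in Ici r, f t) =
        fun r : ℝ => ∫ t, (if r ≤ t then f t else 0) := by
      funext r
      rw [← integral_indicator measurableSet_Ici]
      congr 1 with t
    rw [he]
    exact h2
  set c : ℝ → ℝ≥0∞ := fun r => ENNReal.ofReal (r ^ (α - 1) / α) with hc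
  have hmc : Measurable c := ((hmr (α - 1)).div_const α).ennreal_ofReal
  -- pointwise bound
  have hpt : ∀ r, R ≤ r → ENNReal.ofReal ((∫ t in Ici r, f t) ^ 2 * r ^ (δ - 2)) ≤
      (∫⁻ t in Ici r, Fα t) * c r := by
    intro r hr
    have hr0 : 0 < r := hR.trans_le hr
    have key := aux_cs δ α f hα hαδ hr0 hf (hfi r hr)
    calc ENNReal.ofReal ((∫ t in Ici r, f t) ^ 2 * r ^ (δ - 2))
        = ENNReal.ofReal ((∫ t in Ici r, f t) ^ 2) * ENNReal.ofReal (r ^ (δ - 2)) :=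
          ENNReal.ofReal_mul (sq_nonneg _)
      _ ≤ ((∫⁻ t in Ici r, Fα t) * ENNReal.ofReal (r ^ (α - δ + 1) / (δ - α - 1))) *
            ENNReal.ofReal (r ^ (δ - 2)) := by gcongr
      _ = (∫⁻ t in Ici r, Fα t) * c r := by
          rw [mul_assoc]
          congr 1
          have e : δ - α - 1 = α := by rw [hαdef]; ring
          rw [e, hc, ← ENNReal.ofReal_mul (by positivity), div_mul_eq_mul_div,
            ← Real.rpow_add hr0, show α - δ + 1 + (δ - 2) = α - 1 from by ring]
  -- main lintegral estimate
  have main : (∫⁻ r in Ici R, ENNReal.ofReal ((∫ t in Ici r, f t) ^ 2 * r ^ (δ - 2))) ≤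
      ENNReal.ofReal (1 / α ^ 2) * I := by
    have step1 : (∫⁻ r in Ici R, ENNReal.ofReal ((∫ t in Ici r, f t) ^ 2 * r ^ (δ - 2))) ≤
        ∫⁻ r in Ici R, (∫⁻ t in Ici r, Fα t) * c r := by
      apply lintegral_mono_ae
      filter_upwards [ae_restrict_mem measurableSet_Ici] with r hr
      exact hpt r hr
    have step2 : (∫⁻ r in Ici R, (∫⁻ t in Ici r, Fα t) * c r) =
        ∫⁻ r in Ici R, ∫⁻ t in Ici R, (if r ≤ t then Fα t * c r else 0) := by
      apply lintegral_congr_ae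
      filter_upwards [ae_restrict_mem measurableSet_Ici] with r hr
      have : (fun t => if r ≤ t then Fα t * c r else 0) =
          (Ici r).indicator (fun t => Fα t * c r) := by
        ext t; simp [Set.indicator_apply, mem_Ici]
      rw [this, lintegral_indicator measurableSet_Ici, Measure.restrict_restrict measurableSet_Ici,
        inter_eq_left.2 (Ici_subset_Ici.2 hr), lintegral_mul_const _ hmFα]
    have hswap : (∫⁻ r in Ici R, ∫⁻ t in Ici R, (if r ≤ t then Fα t * c r else 0)) =
        ∫⁻ t in Ici R, ∫⁻ r in Ici R, (if r ≤ t then Fα t * c r else 0) := by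
      apply lintegral_lintegral_swap
      apply Measurable.aemeasurable
      exact Measurable.ite (measurableSet_le measurable_fst measurable_snd)
        ((hmFα.comp measurable_snd).mul (hmc.comp measurable_fst)) measurable_const
    have step3 : ∀ t, R ≤ t → (∫⁻ r in Ici R, if r ≤ t then Fα t * c r else 0) ≤
        ENNReal.ofReal (1 / α ^ 2) * F t := by
      intro t ht
      have ht0 : 0 < t := hR.trans_le ht
      have hind : (fun r => if r ≤ t then Fα t * c r else 0) =
          (Iic t).indicator fun r => Fα t * c r := by
        ext r; simp [Set.indicator_apply, mem_Iic]
      rw [hind, lintegral_indicator measurableSet_Iic, Measure.restrict_restrict measurableSet_Iic,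
        lintegral_const_mul _ hmc]
      have hsub : Iic t ∩ Ici R ⊆ Ioc 0 t := fun x hx => ⟨hR.trans_le hx.2, hx.1⟩
      have hcint : IntegrableOn (fun r : ℝ => r ^ (α - 1) / α) (Ioc 0 t) := by
        have h1 : IntegrableOn (fun r : ℝ => r ^ (α - 1)) (Ioc 0 t) :=
          (intervalIntegral.intervalIntegrable_rpow' (by linarith)).1
        exact h1.div_const α
      have hval : (∫⁻ r in Ioc 0 t, c r) = ENNReal.ofReal (t ^ α / α ^ 2) := by
        have hnn : 0 ≤ᵐ[volume.restrict (Ioc 0 t)] fun r : ℝ => r ^ (α - 1) / α := by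
          filter_upwards [ae_restrict_mem measurableSet_Ioc] with r hr
          have : (0:ℝ) < r := hr.1
          positivity
        have hreal : (∫ r in Ioc 0 t, (r ^ (α - 1) / α)) = t ^ α / α ^ 2 := by
          rw [integral_div, ← intervalIntegral.integral_of_le ht0.le,
            integral_rpow (Or.inl (by linarith : (-1:ℝ) < α - 1)),
            show α - 1 + 1 = α from by ring, Real.zero_rpow hα.ne', sub_zero, div_div, ← pow_two]
        rw [hc, ← ofReal_integral_eq_lintegral_ofReal hcint hnn, hreal]
      calc Fα t * ∫⁻ r in Iic t ∩ Ici R, c r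
          ≤ Fα t * ∫⁻ r in Ioc 0 t, c r := by
            gcongr
        _ = Fα t * ENNReal.ofReal (t ^ α / α ^ 2) := by rw [hval]
        _ = ENNReal.ofReal (1 / α ^ 2) * F t := by
            rw [hFα, hFdef, ← ENNReal.ofReal_mul (by positivity),
              ← ENNReal.ofReal_mul (by positivity)]
            congr 1
            have e : t ^ (δ - α) * t ^ α = t ^ δ := by
              rw [← Real.rpow_add ht0]; ring_nf
            rw [← e]
            field_simp
    calc (∫⁻ r in Ici R, ENNReal.ofReal ((∫ t in Ici r, f t) ^ 2 * r ^ (δ - 2)))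
        ≤ ∫⁻ r in Ici R, (∫⁻ t in Ici r, Fα t) * c r := step1
      _ = ∫⁻ r in Ici R, ∫⁻ t in Ici R, (if r ≤ t then Fα t * c r else 0) := step2
      _ = ∫⁻ t in Ici R, ∫⁻ r in Ici R, (if r ≤ t then Fα t * c r else 0) := hswap
      _ ≤ ∫⁻ t in Ici R, ENNReal.ofReal (1 / α ^ 2) * F t := by
          apply lintegral_mono_ae
          filter_upwards [ae_restrict_mem measurableSet_Ici] with t ht
          exact step3 t ht
      _ = ENNReal.ofReal (1 / α ^ 2) * I := lintegral_const_mul _ hmF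
  -- real conversion
  have hLHS : (∫ r in Ici R, (∫ t in Ici r, f t) ^ 2 * r ^ (δ - 2)) =
      (∫⁻ r in Ici R, ENNReal.ofReal ((∫ t in Ici r, f t) ^ 2 * r ^ (δ - 2))).toReal := by
    rw [integral_eq_lintegral_of_nonneg_ae]
    · filter_upwards [ae_restrict_mem measurableSet_Ici] with r hr
      have hr0 : 0 < r := hR.trans_le hr
      positivity
    · exact ((hgm.measurable.pow_const 2).mul (hmr _)).aestronglyMeasurable
  have hRHS : (∫ t in Ici R, f t ^ 2 * t ^ δ) = I.toReal := by
    rw [hIdef, integral_eq_lintegral_of_nonneg_ae]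
    · filter_upwards [ae_restrict_mem measurableSet_Ici] with t ht
      have ht0 : 0 < t := hR.trans_le ht
      positivity
    · exact ((hf.pow_const 2).mul (hmr _)).aestronglyMeasurable
  rw [hLHS, hRHS]
  have hfin2 : ENNReal.ofReal (1 / α ^ 2) * I ≠ ⊤ := ENNReal.mul_ne_top ENNReal.ofReal_ne_top hIfin
  calc (∫⁻ r in Ici R, ENNReal.ofReal ((∫ t in Ici r, f t) ^ 2 * r ^ (δ - 2))).toReal
      ≤ (ENNReal.ofReal (1 / α ^ 2) * I).toReal := ENNReal.toReal_mono hfin2 main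
    _ = (1 / α ^ 2) * I.toReal := by
        rw [ENNReal.toReal_mul, ENNReal.toReal_ofReal (by positivity)]
    _ = (2 / (δ - 1)) ^ 2 * I.toReal := by
        congr 1
        rw [hαdef, div_pow, div_pow]
        have : δ - 1 ≠ 0 := by linarith
        field_simp
end

section
/- Let δ < 1 and R > 0 be real numbers, and let f : [R,∞) → ℝ be measurable with ∫_R^∞ f(t)² t^δ dt < ∞. Define g(r) := ∫_R^r f(t) dt for r ≥ R. Then ∫_R^∞ g(r)² r^{δ−2} dr ≤ (2/(1−δ))² · ∫_R^∞ f(t)² t^δ dt. (Consequently the operator S f = g satisfies (Sf)' = f and is bounded from L²_δ([R,∞)) to L²_{δ−2}([R,∞)) with norm at most 2/|δ−1|.) -/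
open MeasureTheory Set

open scoped ENNReal

lemma aux_ofReal_integral_le {μ : Measure ℝ} {g : ℝ → ℝ} (hg : 0 ≤ᵐ[μ] g) :
    ENNReal.ofReal (∫ x, g x ∂μ) ≤ ∫⁻ x, ENNReal.ofReal (g x) ∂μ := by
  by_cases hgi : Integrable g μ
  · rw [MeasureTheory.ofReal_integral_eq_lintegral_ofReal hgi hg]
  · rw [integral_undef hgi]; simp

lemma aux_rpow_two (x : ℝ) : x ^ (2:ℝ) = x ^ 2 := by
  rw [← Real.rpow_natCast x 2]; norm_num

lemma aux_CS {μ : Measure ℝ} {φ ψ : ℝ → ℝ≥0∞} (hφ : AEMeasurable φ μ) (hψ : AEMeasurable ψ μ) :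
    (∫⁻ x, φ x * ψ x ∂μ) ^ 2 ≤ (∫⁻ x, φ x ^ (2:ℝ) ∂μ) * (∫⁻ x, ψ x ^ (2:ℝ) ∂μ) := by
  have hpq : Real.HolderConjugate 2 2 := ⟨by norm_num, by norm_num, by norm_num⟩
  have h := ENNReal.lintegral_mul_le_Lp_mul_Lq μ hpq hφ hψ
  simp only [Pi.mul_apply] at h
  calc (∫⁻ x, φ x * ψ x ∂μ) ^ 2
      ≤ ((∫⁻ x, φ x ^ (2:ℝ) ∂μ) ^ (1/(2:ℝ)) * (∫⁻ x, ψ x ^ (2:ℝ) ∂μ) ^ (1/(2:ℝ))) ^ 2 := by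
        gcongr
    _ = _ := by
        rw [mul_pow, ← ENNReal.rpow_natCast (_ ^ (1/(2:ℝ))) 2,
          ← ENNReal.rpow_natCast ((∫⁻ x, ψ x ^ (2:ℝ) ∂μ) ^ (1/(2:ℝ))) 2,
          ← ENNReal.rpow_mul, ← ENNReal.rpow_mul]
        norm_num

theorem stmt_1 (δ R : ℝ) (hδ : δ < 1) (hR : 0 < R) (f : ℝ → ℝ)
    (hf : Measurable f)
    (hint : IntegrableOn (fun t => f t ^ 2 * t ^ δ) (Ici R)) :
    (∫ r in Ici R, (∫ t in R..r, f t) ^ 2 * r ^ (δ - 2)) ≤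
      (2 / (1 - δ)) ^ 2 * ∫ t in Ici R, f t ^ 2 * t ^ δ := by
  have h1δ : (0:ℝ) < 1 - δ := by linarith
  set c : ℝ := 2 / (1 - δ) with hc
  have hc0 : (0:ℝ) < c := by positivity
  set a : ℝ := (1 + δ) / 2 with ha
  set b : ℝ := (δ - 3) / 2 with hb
  have hb1 : b < -1 := by rw [hb]; linarith
  have ha1 : a < 1 := by rw [ha]; linarith
  set H : ℝ → ℝ≥0∞ := fun t => ENNReal.ofReal (f t ^ 2 * t ^ a) with hH
  have hHm : Measurable H := by fun_prop
  set G : ℝ → ℝ := fun r => ∫ t in R..r, f t with hG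
  have hRHSnn : 0 ≤ ∫ t in Ici R, f t ^ 2 * t ^ δ := by
    apply setIntegral_nonneg measurableSet_Ici
    intro t ht
    have ht0 : (0:ℝ) < t := lt_of_lt_of_le hR ht
    positivity
  by_cases hLi : IntegrableOn (fun r => G r ^ 2 * r ^ (δ - 2)) (Ici R)
  swap
  · rw [integral_undef hLi]
    positivity
  -- key pointwise bound
  have key : ∀ r ∈ Ici R, ENNReal.ofReal (G r ^ 2 * r ^ (δ - 2)) ≤
      ENNReal.ofReal c * (ENNReal.ofReal (r ^ b) * ∫⁻ t in Ioc R r, H t) := by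
    intro r hr
    have hRr : R ≤ r := hr
    have hr0 : (0:ℝ) < r := lt_of_lt_of_le hR hRr
    set φ : ℝ → ℝ≥0∞ := fun t => ENNReal.ofReal (|f t| * t ^ (a/2)) with hφdef
    set ψ : ℝ → ℝ≥0∞ := fun t => ENNReal.ofReal (t ^ (-(a/2))) with hψdef
    have hφm : Measurable φ := by fun_prop
    have hψm : Measurable ψ := by fun_prop
    have step1 : ENNReal.ofReal (G r ^ 2) ≤
        (∫⁻ t in Ioc R r, H t) * ∫⁻ t in Ioc R r, ENNReal.ofReal (t ^ (-a)) := by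
      have h1 : |G r| ≤ ∫ t in Ioc R r, |f t| := by
        rw [← intervalIntegral.integral_of_le (f := fun t => |f t|) hRr]
        exact intervalIntegral.abs_integral_le_integral_abs (f := f) (μ := volume) hRr
      have h2 : 0 ≤ ∫ t in Ioc R r, |f t| := le_trans (abs_nonneg _) h1
      have habs : G r ^ 2 ≤ (∫ t in Ioc R r, |f t|) ^ 2 := by
        rw [← sq_abs]
        exact pow_le_pow_left₀ (abs_nonneg _) h1 2
      have hprod : ∫⁻ t in Ioc R r, ENNReal.ofReal |f t| = ∫⁻ t in Ioc R r, φ t * ψ t := by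
        refine setLIntegral_congr_fun measurableSet_Ioc (fun t ht => ?_)
        have ht0 : (0:ℝ) < t := hR.trans ht.1
        rw [hφdef, hψdef, ← ENNReal.ofReal_mul (by positivity), mul_assoc,
          ← Real.rpow_add ht0]
        norm_num
      have hφ2 : ∫⁻ t in Ioc R r, φ t ^ (2:ℝ) = ∫⁻ t in Ioc R r, H t := by
        refine setLIntegral_congr_fun measurableSet_Ioc (fun t ht => ?_)
        have ht0 : (0:ℝ) < t := hR.trans ht.1
        rw [hφdef, hH, ENNReal.ofReal_rpow_of_nonneg (by positivity) (by norm_num)]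
        congr 1
        rw [aux_rpow_two, mul_pow, sq_abs, ← aux_rpow_two (t ^ (a/2)),
          ← Real.rpow_mul ht0.le]
        ring_nf
      have hψ2 : ∫⁻ t in Ioc R r, ψ t ^ (2:ℝ) = ∫⁻ t in Ioc R r, ENNReal.ofReal (t ^ (-a)) := by
        refine setLIntegral_congr_fun measurableSet_Ioc (fun t ht => ?_)
        have ht0 : (0:ℝ) < t := hR.trans ht.1
        rw [hψdef, ENNReal.ofReal_rpow_of_nonneg (by positivity) (by norm_num),
          aux_rpow_two, ← aux_rpow_two (t ^ (-(a/2))), ← Real.rpow_mul ht0.le]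
        ring_nf
      calc ENNReal.ofReal (G r ^ 2)
          ≤ ENNReal.ofReal ((∫ t in Ioc R r, |f t|) ^ 2) := ENNReal.ofReal_le_ofReal habs
        _ = (ENNReal.ofReal (∫ t in Ioc R r, |f t|)) ^ 2 := by
            rw [ENNReal.ofReal_pow h2]
        _ ≤ (∫⁻ t in Ioc R r, ENNReal.ofReal |f t|) ^ 2 := by
            gcongr
            exact aux_ofReal_integral_le (.of_forall fun t => abs_nonneg _)
        _ = (∫⁻ t in Ioc R r, φ t * ψ t) ^ 2 := by rw [hprod]
        _ ≤ (∫⁻ t in Ioc R r, φ t ^ (2:ℝ)) * ∫⁻ t in Ioc R r, ψ t ^ (2:ℝ) :=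
            aux_CS hφm.aemeasurable hψm.aemeasurable
        _ = _ := by rw [hφ2, hψ2]
    have step2 : (∫⁻ t in Ioc R r, ENNReal.ofReal (t ^ (-a))) ≤
        ENNReal.ofReal (c * r ^ (1 - a)) := by
      have hintg : IntegrableOn (fun t : ℝ => t ^ (-a)) (Ioc R r) :=
        (intervalIntegrable_iff_integrableOn_Ioc_of_le hRr).mp
          (intervalIntegral.intervalIntegrable_rpow' (by linarith))
      rw [← MeasureTheory.ofReal_integral_eq_lintegral_ofReal hintg ?_]
      · apply ENNReal.ofReal_le_ofReal
        have hval : ∫ t in Ioc R r, t ^ (-a) = (r ^ (-a + 1) - R ^ (-a + 1)) / (-a + 1) := by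
          rw [← intervalIntegral.integral_of_le hRr]
          exact _root_.integral_rpow (Or.inl (by linarith))
        rw [hval]
        have hra : 0 ≤ R ^ (-a + 1) := Real.rpow_nonneg hR.le _
        have h1a : (0:ℝ) < -a + 1 := by linarith
        calc (r ^ (-a + 1) - R ^ (-a + 1)) / (-a + 1)
            ≤ r ^ (-a + 1) / (-a + 1) := by
              gcongr
              linarith
          _ = c * r ^ (1 - a) := by
              rw [show -a + 1 = 1 - a by ring, hc, ha]
              rw [show (1:ℝ) - (1 + δ)/2 = (1 - δ)/2 by ring]
              have h1 : (1:ℝ) - δ ≠ 0 := by linarith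
              field_simp
      · filter_upwards [ae_restrict_mem measurableSet_Ioc] with t ht
        have ht0 : (0:ℝ) < t := hR.trans ht.1
        positivity
    calc ENNReal.ofReal (G r ^ 2 * r ^ (δ - 2))
        = ENNReal.ofReal (G r ^ 2) * ENNReal.ofReal (r ^ (δ - 2)) :=
          ENNReal.ofReal_mul (sq_nonneg _)
      _ ≤ ((∫⁻ t in Ioc R r, H t) * ENNReal.ofReal (c * r ^ (1 - a))) *
            ENNReal.ofReal (r ^ (δ - 2)) := by
          gcongr
          exact step1.trans (mul_le_mul_right step2 _)
      _ = ENNReal.ofReal c * (ENNReal.ofReal (r ^ b) * ∫⁻ t in Ioc R r, H t) := by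
          rw [ENNReal.ofReal_mul hc0.le, mul_assoc, mul_assoc,
            ← ENNReal.ofReal_mul (Real.rpow_nonneg hr0.le _), ← Real.rpow_add hr0,
            show (1 - a) + (δ - 2) = b by rw [ha, hb]; ring]
          ring
  have nnLHS : 0 ≤ᵐ[volume.restrict (Ici R)] fun r => G r ^ 2 * r ^ (δ - 2) := by
    filter_upwards [ae_restrict_mem measurableSet_Ici] with r hr
    have hr0 : (0:ℝ) < r := lt_of_lt_of_le hR hr
    positivity
  have nnRHS : 0 ≤ᵐ[volume.restrict (Ici R)] fun t => f t ^ 2 * t ^ δ := by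
    filter_upwards [ae_restrict_mem measurableSet_Ici] with t ht
    have ht0 : (0:ℝ) < t := lt_of_lt_of_le hR ht
    positivity
  rw [integral_eq_lintegral_of_nonneg_ae nnLHS hLi.1]
  have hmeas : AEMeasurable
      (Function.uncurry fun r t => ENNReal.ofReal (r ^ b) * (Ioc R r).indicator H t)
      ((volume.restrict (Ici R)).prod (volume.restrict (Ici R))) := by
    have hm : Measurable fun p : ℝ × ℝ => ENNReal.ofReal (p.1 ^ b) *
        ({q : ℝ × ℝ | R < q.2 ∧ q.2 ≤ q.1}).indicator (fun q => H q.2) p := by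
      apply Measurable.mul (by fun_prop)
      exact (hHm.comp measurable_snd).indicator
        ((measurableSet_lt measurable_const measurable_snd).inter
          (measurableSet_le measurable_snd measurable_fst))
    apply Measurable.aemeasurable
    convert hm using 1
    funext ⟨r, t⟩; rfl
  have hRne : ∀ᵐ t ∂(volume.restrict (Ici R)), t ≠ R := by
    apply ae_restrict_of_ae
    rw [ae_iff]
    have h0 : volume ({R} : Set ℝ) = 0 := Real.volume_singleton
    simpa [not_not, setOf_eq_eq_singleton] using h0
  have main : (∫⁻ r in Ici R, ENNReal.ofReal (G r ^ 2 * r ^ (δ - 2))) ≤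
      ENNReal.ofReal c * (ENNReal.ofReal c *
        ENNReal.ofReal (∫ t in Ici R, f t ^ 2 * t ^ δ)) := by
    calc (∫⁻ r in Ici R, ENNReal.ofReal (G r ^ 2 * r ^ (δ - 2)))
        ≤ ∫⁻ r in Ici R, ENNReal.ofReal c *
            (ENNReal.ofReal (r ^ b) * ∫⁻ t in Ioc R r, H t) := by
          refine lintegral_mono_ae ?_
          filter_upwards [ae_restrict_mem measurableSet_Ici] with r hr using key r hr
      _ = ENNReal.ofReal c * ∫⁻ r in Ici R, ∫⁻ t in Ici R,
            ENNReal.ofReal (r ^ b) * (Ioc R r).indicator H t := by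
          rw [lintegral_const_mul' _ _ ENNReal.ofReal_ne_top]
          congr 1
          refine setLIntegral_congr_fun measurableSet_Ici (fun r hr => ?_)
          rw [lintegral_const_mul' _ _ ENNReal.ofReal_ne_top]
          congr 1
          rw [lintegral_indicator measurableSet_Ioc,
            Measure.restrict_restrict measurableSet_Ioc,
            inter_eq_self_of_subset_left
              (show Ioc R r ⊆ Ici R from fun x hx => le_of_lt hx.1)]
      _ = ENNReal.ofReal c * ∫⁻ t in Ici R, ∫⁻ r in Ici R,
            ENNReal.ofReal (r ^ b) * (Ioc R r).indicator H t := by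
          congr 1
          exact lintegral_lintegral_swap hmeas
      _ ≤ ENNReal.ofReal c * ∫⁻ t in Ici R,
            ENNReal.ofReal c * ENNReal.ofReal (f t ^ 2 * t ^ δ) := by
          refine mul_le_mul_right (lintegral_mono_ae ?_) _
          filter_upwards [ae_restrict_mem measurableSet_Ici, hRne] with t ht htne
          have htR : R < t := lt_of_le_of_ne ht (Ne.symm htne)
          have ht0 : (0:ℝ) < t := hR.trans htR
          have e1 : (∫⁻ r in Ici R, ENNReal.ofReal (r ^ b) * (Ioc R r).indicator H t)
              = ∫⁻ r in Ici R, (Ici t).indicator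
                  (fun r => ENNReal.ofReal (r ^ b) * H t) r := by
            refine setLIntegral_congr_fun measurableSet_Ici (fun r _ => ?_)
            simp only [Set.indicator_apply, mem_Ioc, mem_Ici]
            by_cases h : t ≤ r <;> simp [h, htR]
          rw [e1, lintegral_indicator measurableSet_Ici,
            Measure.restrict_restrict measurableSet_Ici,
            inter_eq_self_of_subset_left (Ici_subset_Ici.mpr htR.le),
            lintegral_mul_const' _ _ ENNReal.ofReal_ne_top]
          have e2 : (∫⁻ r in Ici t, ENNReal.ofReal (r ^ b)) =
              ENNReal.ofReal (c * t ^ ((δ - 1)/2)) := by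
            rw [← setLIntegral_congr (Ioi_ae_eq_Ici (a := t)),
              ← MeasureTheory.ofReal_integral_eq_lintegral_ofReal
                (integrableOn_Ioi_rpow_of_lt hb1 ht0) ?_]
            · rw [integral_Ioi_rpow_of_lt hb1 ht0]
              congr 1
              rw [show b + 1 = (δ - 1)/2 by rw [hb]; ring, hc]
              have h1 : (1:ℝ) - δ ≠ 0 := by linarith
              have h2 : δ - 1 ≠ 0 := by linarith
              field_simp
              ring
            · filter_upwards [ae_restrict_mem measurableSet_Ioi] with s hs
              have hs0 : (0:ℝ) < s := ht0.trans hs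
              positivity
          rw [e2, ← ENNReal.ofReal_mul (by positivity)]
          rw [show c * t ^ ((δ - 1)/2) * (f t ^ 2 * t ^ a) =
              c * (f t ^ 2 * (t ^ ((δ - 1)/2) * t ^ a)) by ring,
            ← Real.rpow_add ht0, show (δ - 1)/2 + a = δ by rw [ha]; ring,
            ENNReal.ofReal_mul hc0.le]
      _ = ENNReal.ofReal c * (ENNReal.ofReal c *
            ENNReal.ofReal (∫ t in Ici R, f t ^ 2 * t ^ δ)) := by
          rw [lintegral_const_mul' _ _ ENNReal.ofReal_ne_top,
            MeasureTheory.ofReal_integral_eq_lintegral_ofReal hint nnRHS]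
  have hne : ENNReal.ofReal c * (ENNReal.ofReal c *
      ENNReal.ofReal (∫ t in Ici R, f t ^ 2 * t ^ δ)) ≠ ⊤ := by
    exact ENNReal.mul_ne_top ENNReal.ofReal_ne_top
      (ENNReal.mul_ne_top ENNReal.ofReal_ne_top ENNReal.ofReal_ne_top)
  calc (∫⁻ r in Ici R, ENNReal.ofReal (G r ^ 2 * r ^ (δ - 2))).toReal
      ≤ (ENNReal.ofReal c * (ENNReal.ofReal c *
          ENNReal.ofReal (∫ t in Ici R, f t ^ 2 * t ^ δ))).toReal :=
        ENNReal.toReal_mono hne main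
    _ = (2 / (1 - δ)) ^ 2 * ∫ t in Ici R, f t ^ 2 * t ^ δ := by
        rw [ENNReal.toReal_mul, ENNReal.toReal_mul, ENNReal.toReal_ofReal hc0.le,
          ENNReal.toReal_ofReal hRHSnn, hc]
        ring
end

section
/- Let m ∈ ℝ, k ∈ ℕ, and let x₁, …, x_k be points of ℝ³ (EuclideanSpace ℝ (Fin 3)). Define, for x outside a compact set containing 0 and all ±x_α, V(x) = 1 − 16m/‖x‖ + Σ_{α=1}^{k} (4m/‖x − x_α‖ + 4m/‖x + x_α‖). Then the function x ↦ V(x) − 1 − 8m(k−2)/‖x‖ is O(‖x‖^{−3}) as ‖x‖ → ∞ (i.e., along the cocompact filter on ℝ³). -/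
open Filter Asymptotics

lemma arith (a b c r : ℝ) (hc : 0 ≤ c) (hr : 2*c + 1 ≤ r)
    (ha : |a - r| ≤ c) (hb : |b - r| ≤ c) (hab : a^2 + b^2 = 2*r^2 + 2*c^2) :
    |1/a + 1/b - 2/r| ≤ 40 * c^2 / r^3 := by
  have hr0 : (0:ℝ) < r := by linarith
  have ha' := abs_le.1 ha
  have hb' := abs_le.1 hb
  have ha0 : 0 < a := by linarith [ha'.1]
  have hb0 : 0 < b := by linarith [hb'.1]
  have key : 1/a + 1/b - 2/r = (r*(a+b) - 2*a*b)/(a*b*r) := by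
    field_simp; ring
  rw [key, abs_div, abs_of_pos (by positivity : (0:ℝ) < a*b*r)]
  have hs : r * ((a+b) - 2*r) = c^2 - ((a-r)^2 + (b-r)^2)/2 := by nlinarith [hab]
  have hN : |r*(a+b) - 2*a*b| ≤ 10*c^2 := by
    rw [abs_le]
    constructor <;> nlinarith [sq_nonneg (a-r), sq_nonneg (b-r), sq_nonneg c, mul_pos ha0 hb0]
  rw [div_le_div_iff₀ (by positivity) (by positivity)]
  calc |r*(a+b) - 2*a*b| * r^3 ≤ 10*c^2 * r^3 := by
        apply mul_le_mul_of_nonneg_right hN (by positivity)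
    _ ≤ 40*c^2 * (a*b*r) := by
        have h1 : (r-c)*(r-c) ≤ a*b := by nlinarith [ha'.1, hb'.1]
        have h2 : r ≤ 2*(r-c) := by linarith
        have h3 : c^2*r*((r-c)*(r-c)) ≤ c^2*r*(a*b) :=
          mul_le_mul_of_nonneg_left h1 (by positivity)
        nlinarith [h3, mul_nonneg (mul_nonneg (sq_nonneg c) hr0.le)
          (mul_nonneg (by linarith : (0:ℝ) ≤ 2*(r-c)-r) (by linarith : (0:ℝ) ≤ 2*(r-c)+r))]

lemma single (m : ℝ) (q : EuclideanSpace ℝ (Fin 3)) :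
    (fun x : EuclideanSpace ℝ (Fin 3) =>
        4 * m / ‖x - q‖ + 4 * m / ‖x + q‖ - 8 * m / ‖x‖)
      =O[cocompact (EuclideanSpace ℝ (Fin 3))]
      (fun x => ‖x‖ ^ (-3 : ℤ)) := by
  rw [isBigO_iff]
  refine ⟨|4*m| * (40 * ‖q‖^2), ?_⟩
  filter_upwards [tendsto_norm_cocompact_atTop.eventually_ge_atTop (2*‖q‖+1)]
    with x hx
  have hc0 : (0:ℝ) ≤ ‖q‖ := norm_nonneg q
  have hr0 : (0:ℝ) < ‖x‖ := by linarith
  have ha : |‖x - q‖ - ‖x‖| ≤ ‖q‖ := by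
    simpa using abs_norm_sub_norm_le (x - q) x
  have hb : |‖x + q‖ - ‖x‖| ≤ ‖q‖ := by
    simpa using abs_norm_sub_norm_le (x + q) x
  have hpar := parallelogram_law_with_norm ℝ x q
  have hab : ‖x - q‖^2 + ‖x + q‖^2 = 2*‖x‖^2 + 2*‖q‖^2 := by
    nlinarith [hpar]
  have hkey := arith ‖x - q‖ ‖x + q‖ ‖q‖ ‖x‖ hc0 hx ha hb hab
  have h1 : 4 * m / ‖x - q‖ + 4 * m / ‖x + q‖ - 8 * m / ‖x‖
      = 4 * m * (1/‖x - q‖ + 1/‖x + q‖ - 2/‖x‖) := by ring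
  have h2 : (‖x‖ : ℝ) ^ (-3 : ℤ) = 1 / ‖x‖^3 := by
    rw [show ((-3:ℤ)) = -(3:ℕ) by norm_num, zpow_neg, zpow_natCast]
    ring
  rw [Real.norm_eq_abs, Real.norm_eq_abs, h1, h2, abs_mul]
  have h3 : |1/‖x‖^3| = 1/‖x‖^3 := abs_of_pos (by positivity)
  rw [h3]
  calc |4*m| * |1/‖x - q‖ + 1/‖x + q‖ - 2/‖x‖|
      ≤ |4*m| * (40 * ‖q‖^2 / ‖x‖^3) := by
        exact mul_le_mul_of_nonneg_left hkey (abs_nonneg _)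
    _ = |4*m| * (40 * ‖q‖^2) * (1/‖x‖^3) := by ring

theorem stmt_7 (m : ℝ) (k : ℕ) (p : Fin k → EuclideanSpace ℝ (Fin 3)) :
    (fun x : EuclideanSpace ℝ (Fin 3) =>
        (1 - 16 * m / ‖x‖ + ∑ α, (4 * m / ‖x - p α‖ + 4 * m / ‖x + p α‖)) -
          1 - 8 * m * ((k : ℝ) - 2) / ‖x‖)
      =O[cocompact (EuclideanSpace ℝ (Fin 3))]
      (fun x => ‖x‖ ^ (-3 : ℤ)) := by
  have heq : (fun x : EuclideanSpace ℝ (Fin 3) =>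
        (1 - 16 * m / ‖x‖ + ∑ α, (4 * m / ‖x - p α‖ + 4 * m / ‖x + p α‖)) -
          1 - 8 * m * ((k : ℝ) - 2) / ‖x‖)
      = fun x => ∑ α, (4 * m / ‖x - p α‖ + 4 * m / ‖x + p α‖ - 8 * m / ‖x‖) := by
    funext x
    rw [Finset.sum_sub_distrib, Finset.sum_const, Finset.card_univ, Fintype.card_fin,
      nsmul_eq_mul]
    ring
  rw [heq]
  exact IsBigO.fun_sum fun α _ => single m (p α)
end

section
/- Let a ∈ ℝ³ (EuclideanSpace ℝ (Fin 3)). Then the function x ↦ 1/‖x − a‖ + 1/‖x + a‖ − 2/‖x‖, defined for x outside a compact set containing 0, a and −a, is O(‖x‖^{−3}) as ‖x‖ → ∞ (along the cocompact filter on ℝ³). -/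
lemma sqrt_step {a b : ℝ} (ha : 0 ≤ a) (h : a^2 ≤ b^2) (hb : 0 ≤ b) : a ≤ b := by
  have := Real.sqrt_le_sqrt h
  rwa [Real.sqrt_sq ha, Real.sqrt_sq hb] at this

set_option maxHeartbeats 1600000 in
lemma key_ineq (c t r u v : ℝ) (hc : 0 ≤ c) (hu : 0 ≤ u) (hv : 0 ≤ v)
    (hu2 : u^2 = r^2 - 2*t + c) (hv2 : v^2 = r^2 + 2*t + c)
    (ht : t^2 ≤ c * r^2) (hr1 : 1 ≤ r) (hr4 : 4*c ≤ r^2) :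
    |1/u + 1/v - 2/r| ≤ 15*c / r^3 := by
  have hr0 : 0 < r := lt_of_lt_of_le one_pos hr1
  have hcr : c ≤ r^2/4 := by linarith
  have hfact : 0 ≤ (r^2/4 - c) * (9/4*r^2 - c) := by
    apply mul_nonneg <;> linarith
  have hB : (0:ℝ) ≤ 3/4*r^2 + c := by positivity
  have h2tsq : (2*t)^2 ≤ (3/4*r^2 + c)^2 := by nlinarith
  have h2t : 2*t ≤ 3/4*r^2 + c :=
    le_trans (le_abs_self _) (by
      have := sqrt_step (abs_nonneg (2*t)) (by rwa [sq_abs]) hB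
      exact this)
  have h2t' : -(2*t) ≤ 3/4*r^2 + c :=
    le_trans (neg_le_abs _) (by
      have := sqrt_step (abs_nonneg (2*t)) (by rwa [sq_abs]) hB
      exact this)
  have hup : r/2 ≤ u := by
    apply sqrt_step (by positivity) _ hu
    rw [hu2]; nlinarith
  have hvp : r/2 ≤ v := by
    apply sqrt_step (by positivity) _ hv
    rw [hv2]; nlinarith
  have hu0 : 0 < u := by linarith
  have hv0 : 0 < v := by linarith
  have hp2 : (u*v)^2 = (r^2+c)^2 - 4*t^2 := by
    have : (u*v)^2 = u^2 * v^2 := by ring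
    rw [this, hu2, hv2]; ring
  have hplo : r^2 - c ≤ u*v := by
    apply sqrt_step (by nlinarith) _ (mul_nonneg hu hv)
    rw [hp2]; nlinarith
  have hphi : u*v ≤ r^2 + c := by
    apply sqrt_step (mul_nonneg hu hv) _ (by positivity)
    rw [hp2]; nlinarith [sq_nonneg t]
  obtain ⟨N, hN⟩ : ∃ N, N = r*(u+v) - 2*(u*v) := ⟨_, rfl⟩
  obtain ⟨D, hD⟩ : ∃ D, D = r*(u+v) + 2*(u*v) := ⟨_, rfl⟩
  have hDlo : 3/2*r^2 ≤ D := by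
    rw [hD]
    have h0 : 0 ≤ r*(u+v) := by positivity
    have : 3/2*r^2 ≤ 2*(u*v) := by linarith
    linarith
  have hDpos : (0:ℝ) < D := lt_of_lt_of_le (by positivity) hDlo
  have hND : N*D = 2*r^4 + 2*c*r^2 + 2*r^2*(u*v) - 4*((r^2+c)^2 - 4*t^2) := by
    have h1 : N*D = r^2*(u^2+v^2) + 2*r^2*(u*v) - 4*(u*v)^2 := by rw [hN, hD]; ring
    rw [h1, hp2, hu2, hv2]; ring
  have hpr2hi : r^2*(u*v) ≤ r^2*(r^2+c) := by
    apply mul_le_mul_of_nonneg_left hphi (by positivity)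
  have hpr2lo : r^2*(r^2-c) ≤ r^2*(u*v) := by
    apply mul_le_mul_of_nonneg_left hplo (by positivity)
  have hc2 : 4*c^2 ≤ c*r^2 := by
    calc 4*c^2 = c*(4*c) := by ring
      _ ≤ c*r^2 := mul_le_mul_of_nonneg_left hr4 hc
  have hpr2hi' : r^2*(u*v) ≤ r^4 + c*r^2 := by
    calc r^2*(u*v) ≤ r^2*(r^2+c) := hpr2hi
      _ = r^4 + c*r^2 := by ring
  have hpr2lo' : r^4 - c*r^2 ≤ r^2*(u*v) := by
    calc r^4 - c*r^2 = r^2*(r^2-c) := by ring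
      _ ≤ r^2*(u*v) := hpr2lo
  have hexp : 4*((r^2+c)^2 - 4*t^2) = 4*r^4 + 8*(c*r^2) + 4*c^2 - 16*t^2 := by ring
  have hNDhi : N*D ≤ 16*c*r^2 := by
    rw [hND, hexp]; nlinarith [sq_nonneg c]
  have hNDlo : -(16*c*r^2) ≤ N*D := by
    rw [hND, hexp]; nlinarith [sq_nonneg t]
  have habsND : |N| * D ≤ 16*c*r^2 := by
    rw [← abs_of_pos hDpos, ← abs_mul]
    exact abs_le.mpr ⟨hNDlo, hNDhi⟩
  have hNbound : |N| ≤ 32/3*c := by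
    have h1 : |N| * (3/2*r^2) ≤ (32/3*c) * (3/2*r^2) := by
      calc |N| * (3/2*r^2) ≤ |N| * D := mul_le_mul_of_nonneg_left hDlo (abs_nonneg N)
        _ ≤ 16*c*r^2 := habsND
        _ = (32/3*c) * (3/2*r^2) := by ring
    exact le_of_mul_le_mul_right h1 (by positivity)
  have hfeq : 1/u + 1/v - 2/r = N/(r*(u*v)) := by
    rw [hN]
    field_simp
    ring
  rw [hfeq, abs_div, abs_of_pos (by positivity : (0:ℝ) < r*(u*v))]
  have hden : 3/4*r^3 ≤ r*(u*v) := by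
    calc 3/4*r^3 = r*(3/4*r^2) := by ring
      _ ≤ r*(r^2-c) := by apply mul_le_mul_of_nonneg_left (by linarith) hr0.le
      _ ≤ r*(u*v) := mul_le_mul_of_nonneg_left hplo hr0.le
  calc |N| / (r*(u*v)) ≤ (32/3*c) / (3/4*r^3) := by
        apply div_le_div₀ (by positivity) hNbound (by positivity) hden
    _ ≤ 15*c / r^3 := by
        rw [div_le_div_iff₀ (by positivity) (by positivity)]
        nlinarith [mul_nonneg hc (pow_pos hr0 3).le]

open Filter Asymptotics

theorem stmt_8 (a : EuclideanSpace ℝ (Fin 3)) :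
    (fun x : EuclideanSpace ℝ (Fin 3) => 1 / ‖x - a‖ + 1 / ‖x + a‖ - 2 / ‖x‖)
      =O[cocompact (EuclideanSpace ℝ (Fin 3))]
      (fun x => ‖x‖ ^ (-3 : ℤ)) := by
  rw [isBigO_iff]
  refine ⟨15 * ‖a‖^2, ?_⟩
  filter_upwards [tendsto_norm_cocompact_atTop.eventually_ge_atTop (2*‖a‖+1)] with x hx
  have ha : (0:ℝ) ≤ ‖a‖ := norm_nonneg a
  have hr1 : (1:ℝ) ≤ ‖x‖ := by linarith
  have hr0 : (0:ℝ) < ‖x‖ := by linarith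
  have hCS : (inner ℝ x a : ℝ)^2 ≤ ‖a‖^2 * ‖x‖^2 := by
    have h := abs_real_inner_le_norm x a
    calc (inner ℝ x a : ℝ)^2 = |(inner ℝ x a : ℝ)|^2 := (sq_abs _).symm
      _ ≤ (‖x‖ * ‖a‖)^2 := by
          apply pow_le_pow_left₀ (abs_nonneg _) h
      _ = ‖a‖^2 * ‖x‖^2 := by ring
  have h4c : 4 * ‖a‖^2 ≤ ‖x‖^2 := by nlinarith
  have key := key_ineq (‖a‖^2) (inner ℝ x a : ℝ) ‖x‖ ‖x - a‖ ‖x + a‖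
    (by positivity) (norm_nonneg _) (norm_nonneg _)
    (by rw [norm_sub_sq_real])
    (by rw [norm_add_sq_real])
    hCS hr1 h4c
  have hg : ‖x‖ ^ (-3:ℤ) = (‖x‖^3)⁻¹ := by
    rw [zpow_neg, show (3:ℤ) = ((3:ℕ):ℤ) from rfl, zpow_natCast]
  rw [Real.norm_eq_abs, Real.norm_eq_abs, hg,
    abs_of_pos (inv_pos.mpr (pow_pos hr0 3))]
  calc |1 / ‖x - a‖ + 1 / ‖x + a‖ - 2 / ‖x‖| ≤ 15 * ‖a‖^2 / ‖x‖^3 := key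
    _ = 15 * ‖a‖^2 * (‖x‖^3)⁻¹ := by ring
end

section
/- Let I be a finite type with at least 2 elements, equipped with: n : I → ℕ with n i ≥ 1 for all i (multiplicities); a symmetric c : I → I → ℕ (intersection numbers, used for i ≠ j); s : I → ℤ (self-intersections); g : I → ℕ (virtual genera); κ : I → ℕ (anticanonical degrees). Assume: (adjunction) for all i, 2(g i) − 2 − s i = −(κ i); (fiber identity) for all i, (n i)(s i) + Σ_{j ≠ i} (n j)(c i j) = 0; (connectedness) the graph on I in which i and j are adjacent iff i ≠ j and c i j > 0 is connected; (boundary) there exist distinct a, b ∈ I with κ a = κ b = 1, n a = n b = 1, and κ i = 0 for every i ∉ {a, b}. Then, writing m + 1 for the cardinality of I, there is a bijection e from {0,1,…,m} to I with e(0) = a and e(m) = b such that: n i = 1 and g i = 0 for all i; c(e i)(e j) = 1 if |i − j| = 1 and c(e i)(e j) = 0 if i ≠ j and |i − j| ≠ 1; and s(e i) = −2 + (1 if i = 0 else 0) + (1 if i = m else 0). -/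
set_option linter.unusedSectionVars false
set_option maxHeartbeats 1000000

section ChainAux
variable {I : Type*} [Fintype I] [DecidableEq I]

lemma aux_sum_one {t : Finset I} {F : I → ℕ} (h : ∑ j ∈ t, F j = 1) :
    ∃ j ∈ t, F j = 1 ∧ ∀ k ∈ t, k ≠ j → F k = 0 := by
  obtain ⟨j, hj, hFj⟩ : ∃ j ∈ t, F j ≠ 0 := by
    by_contra hc
    push_neg at hc
    rw [Finset.sum_eq_zero hc] at h
    exact one_ne_zero h.symm
  have hsplit : F j + ∑ k ∈ t.erase j, F k = 1 := by
    rw [Finset.add_sum_erase t F hj, h]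
  have hFj1 : F j = 1 := by omega
  have hrest : ∑ k ∈ t.erase j, F k = 0 := by omega
  refine ⟨j, hj, hFj1, fun k hk hkj => ?_⟩
  exact Finset.sum_eq_zero_iff.mp hrest k (Finset.mem_erase.mpr ⟨hkj, hk⟩)

def Wsum (n : I → ℕ) (c : I → I → ℕ) (i : I) : ℕ :=
  ∑ j ∈ Finset.univ.erase i, n j * c i j

def ChainProp (n : I → ℕ) (c : I → I → ℕ) (a b : I) (f : ℕ → I) (ℓ : ℕ) : Prop :=
  f 0 = a ∧
  (∀ i < ℓ, ∀ j < ℓ, f i = f j → i = j) ∧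
  (∀ i < ℓ, n (f i) = 1) ∧
  (∀ i, i + 1 < ℓ → f i ≠ b) ∧
  (∀ i, i + 1 < ℓ → c (f i) (f (i + 1)) = 1) ∧
  (∀ i, i + 1 < ℓ → ∀ k, k ≠ f (i - 1) → k ≠ f i → k ≠ f (i + 1) → c (f i) k = 0)

lemma chain_bound {n : I → ℕ} {c : I → I → ℕ} {a b : I} {f : ℕ → I} {ℓ : ℕ}
    (h : ChainProp n c a b f ℓ) : ℓ ≤ Fintype.card I := by
  obtain ⟨-, hinj, -⟩ := h
  calc ℓ = (Finset.range ℓ).card := (Finset.card_range ℓ).symm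
    _ = ((Finset.range ℓ).image f).card := by
        rw [Finset.card_image_of_injOn]
        intro i hi j hj hij
        exact hinj i (Finset.mem_range.mp hi) j (Finset.mem_range.mp hj) hij
    _ ≤ Fintype.card I := by
        rw [← Finset.card_univ]
        exact Finset.card_le_card (Finset.subset_univ _)

lemma chain_extend {n : I → ℕ} (hn : ∀ i, 1 ≤ n i) {c : I → I → ℕ}
    (hcsymm : ∀ i j, c i j = c j i) {a b : I} (hab : a ≠ b)
    (hWa : Wsum n c a = 1)
    (hW : ∀ i, i ≠ a → i ≠ b → Wsum n c i = 2 * n i)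
    {f : ℕ → I} {ℓ : ℕ} (hℓ : 1 ≤ ℓ) (hch : ChainProp n c a b f ℓ)
    (hlast : f (ℓ - 1) ≠ b) :
    ∃ f' : ℕ → I, (∀ i < ℓ, f' i = f i) ∧ ChainProp n c a b f' (ℓ + 1) := by
  obtain ⟨hhead, hinj, hone, hnotb, hadj, hcl⟩ := hch
  rcases eq_or_lt_of_le hℓ with h1 | h2
  · -- ℓ = 1
    have hℓ1 : ℓ = 1 := h1.symm
    subst hℓ1
    have hWa' : ∑ j ∈ Finset.univ.erase a, n j * c a j = 1 := hWa
    obtain ⟨q, hqmem, hq1, hq0⟩ := aux_sum_one hWa'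
    have hqa : q ≠ a := (Finset.mem_erase.mp hqmem).1
    have hnq : n q = 1 ∧ c a q = 1 := mul_eq_one.mp hq1
    refine ⟨Function.update f 1 q, fun i hi => Function.update_of_ne (by omega) _ _, ?_⟩
    have e0 : Function.update f 1 q 0 = a := by
      rw [Function.update_of_ne (by omega)]; exact hhead
    have e1 : Function.update f 1 q 1 = q := Function.update_self _ _ _
    refine ⟨e0, ?_, ?_, ?_, ?_, ?_⟩
    · intro i hi j hj hij
      interval_cases i <;> interval_cases j
      · rfl
      · rw [e0, e1] at hij; exact absurd hij.symm hqa
      · rw [e1, e0] at hij; exact absurd hij hqa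
      · rfl
    · intro i hi
      interval_cases i
      · rw [e0, ← hhead]; exact hone 0 (by omega)
      · rw [e1]; exact hnq.1
    · intro i hi
      have : i = 0 := by omega
      subst this
      rw [e0]; exact hab
    · intro i hi
      have : i = 0 := by omega
      subst this
      rw [e0, e1]; exact hnq.2
    · intro i hi k hk1 hk2 hk3
      have : i = 0 := by omega
      subst this

      rw [e0] at hk2
      rw [e1] at hk3
      rw [e0]
      have hkmem : k ∈ Finset.univ.erase a := Finset.mem_erase.mpr ⟨hk2, Finset.mem_univ k⟩
      have := hq0 k hkmem hk3
      rcases Nat.mul_eq_zero.mp this with h | h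
      · exact absurd h (by have := hn k; omega)
      · exact h
  · -- 2 ≤ ℓ
    have hva : f (ℓ - 1) ≠ a := by
      intro h
      have := hinj (ℓ - 1) (by omega) 0 (by omega) (by rw [hhead]; exact h)
      omega
    have hnv : n (f (ℓ - 1)) = 1 := hone (ℓ - 1) (by omega)
    have hWv : ∑ j ∈ Finset.univ.erase (f (ℓ - 1)), n j * c (f (ℓ - 1)) j = 2 := by
      have : Wsum n c (f (ℓ - 1)) = 2 := by rw [hW _ hva hlast, hnv]
      exact this
    have hpv : f (ℓ - 2) ≠ f (ℓ - 1) := by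
      intro h
      have := hinj (ℓ - 2) (by omega) (ℓ - 1) (by omega) h
      omega
    have hcpv : c (f (ℓ - 2)) (f (ℓ - 1)) = 1 := by
      have := hadj (ℓ - 2) (by omega)
      have e : ℓ - 2 + 1 = ℓ - 1 := by omega
      rw [e] at this
      exact this
    have hcvp : c (f (ℓ - 1)) (f (ℓ - 2)) = 1 := by rw [hcsymm]; exact hcpv
    have hnp : n (f (ℓ - 2)) = 1 := hone (ℓ - 2) (by omega)
    have hpmem : f (ℓ - 2) ∈ Finset.univ.erase (f (ℓ - 1)) :=
      Finset.mem_erase.mpr ⟨hpv, Finset.mem_univ _⟩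
    have hsplit := Finset.add_sum_erase (Finset.univ.erase (f (ℓ - 1)))
      (fun k => n k * c (f (ℓ - 1)) k) hpmem
    rw [hWv, hnp, hcvp] at hsplit
    have hrest : ∑ k ∈ (Finset.univ.erase (f (ℓ - 1))).erase (f (ℓ - 2)),
        n k * c (f (ℓ - 1)) k = 1 := by omega
    obtain ⟨q, hqmem, hq1, hq0⟩ := aux_sum_one hrest
    have hqp : q ≠ f (ℓ - 2) := (Finset.mem_erase.mp hqmem).1
    have hqv : q ≠ f (ℓ - 1) := (Finset.mem_erase.mp (Finset.mem_erase.mp hqmem).2).1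
    have hnq : n q = 1 ∧ c (f (ℓ - 1)) q = 1 := mul_eq_one.mp hq1
    have hq0' : ∀ k, k ≠ f (ℓ - 1) → k ≠ f (ℓ - 2) → k ≠ q → c (f (ℓ - 1)) k = 0 := by
      intro k hkv hkp hkq
      have hkmem : k ∈ (Finset.univ.erase (f (ℓ - 1))).erase (f (ℓ - 2)) :=
        Finset.mem_erase.mpr ⟨hkp, Finset.mem_erase.mpr ⟨hkv, Finset.mem_univ k⟩⟩
      rcases Nat.mul_eq_zero.mp (hq0 k hkmem hkq) with h | h
      · exact absurd h (by have := hn k; omega)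
      · exact h
    have hqnew : ∀ i < ℓ, f i ≠ q := by
      intro i hi hfi
      have hi1 : i ≠ ℓ - 1 := by intro h; rw [h] at hfi; exact hqv hfi.symm
      have hi2 : i ≠ ℓ - 2 := by intro h; rw [h] at hfi; exact hqp hfi.symm
      have hii : i + 1 < ℓ - 1 := by omega
      have h0 : c (f i) (f (ℓ - 1)) = 0 := by
        apply hcl i (by omega) (f (ℓ - 1))
        · intro h
          have := hinj (ℓ - 1) (by omega) (i - 1) (by omega) h
          omega
        · intro h
          have := hinj (ℓ - 1) (by omega) i (by omega) h
          omega
        · intro h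
          have := hinj (ℓ - 1) (by omega) (i + 1) (by omega) h
          omega
      rw [hfi] at h0
      rw [hcsymm] at h0
      rw [hnq.2] at h0
      omega
    refine ⟨Function.update f ℓ q, fun i hi => Function.update_of_ne (by omega) _ _, ?_⟩
    have elt : ∀ i < ℓ, Function.update f ℓ q i = f i :=
      fun i hi => Function.update_of_ne (by omega) _ _
    have eℓ : Function.update f ℓ q ℓ = q := Function.update_self _ _ _
    refine ⟨?_, ?_, ?_, ?_, ?_, ?_⟩
    · rw [elt 0 (by omega)]; exact hhead
    · intro i hi j hj hij
      rcases Nat.lt_succ_iff_lt_or_eq.mp hi with hi' | hi' <;>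
        rcases Nat.lt_succ_iff_lt_or_eq.mp hj with hj' | hj'
      · exact hinj i hi' j hj' (by rwa [elt i hi', elt j hj'] at hij)
      · subst hj'; rw [elt i hi', eℓ] at hij; exact absurd hij (hqnew i hi')
      · subst hi'; rw [eℓ, elt j hj'] at hij; exact absurd hij.symm (hqnew j hj')
      · omega
    · intro i hi
      rcases Nat.lt_succ_iff_lt_or_eq.mp hi with hi' | hi'
      · rw [elt i hi']; exact hone i hi'
      · subst hi'; rw [eℓ]; exact hnq.1
    · intro i hi
      have hi' : i < ℓ := by omega
      rw [elt i hi']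
      rcases lt_or_ge (i + 1) ℓ with h | h
      · exact hnotb i h
      · have : i = ℓ - 1 := by omega
        subst this; exact hlast
    · intro i hi
      rcases lt_or_ge (i + 1) ℓ with h | h
      · rw [elt i (by omega), elt (i + 1) h]; exact hadj i h
      · have hieq : i = ℓ - 1 := by omega
        have h1 : i + 1 = ℓ := by omega
        rw [elt i (by omega), h1, eℓ, hieq]
        exact hnq.2
    · intro i hi k hk1 hk2 hk3
      rcases lt_or_ge (i + 1) ℓ with h | h
      · rw [elt i (by omega)]
        apply hcl i h k
        · rwa [elt (i - 1) (by omega)] at hk1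
        · rwa [elt i (by omega)] at hk2
        · rwa [elt (i + 1) h] at hk3
      · have hieq : i = ℓ - 1 := by omega
        have h1 : i + 1 = ℓ := by omega
        rw [elt i (by omega), hieq]
        apply hq0' k
        · rwa [elt i (by omega), hieq] at hk2
        · have e2 : i - 1 = ℓ - 2 := by omega
          rwa [elt (i - 1) (by omega), e2] at hk1
        · rwa [h1, eℓ] at hk3


lemma chain_to_b {n : I → ℕ} (hn : ∀ i, 1 ≤ n i) {c : I → I → ℕ}
    (hcsymm : ∀ i j, c i j = c j i) {a b : I} (hab : a ≠ b) (hna : n a = 1)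
    (hWa : Wsum n c a = 1)
    (hW : ∀ i, i ≠ a → i ≠ b → Wsum n c i = 2 * n i) :
    ∃ (ℓ : ℕ) (f : ℕ → I), 1 ≤ ℓ ∧ ChainProp n c a b f ℓ ∧ f (ℓ - 1) = b := by
  suffices H : ∀ d ℓ (f : ℕ → I), 1 ≤ ℓ → ChainProp n c a b f ℓ →
      Fintype.card I + 1 - ℓ ≤ d →
      ∃ (ℓ' : ℕ) (f' : ℕ → I), 1 ≤ ℓ' ∧ ChainProp n c a b f' ℓ' ∧ f' (ℓ' - 1) = b by
    refine H (Fintype.card I) 1 (fun _ => a) le_rfl ?_ (by omega)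
    refine ⟨rfl, ?_, ?_, ?_, ?_, ?_⟩
    · intro i hi j hj _; omega
    · intro i _; exact hna
    · intro i hi; exact absurd hi (by omega)
    · intro i hi; exact absurd hi (by omega)
    · intro i hi; exact absurd hi (by omega)
  intro d
  induction d with
  | zero =>
    intro ℓ f h1 hch hd
    have := chain_bound hch
    omega
  | succ d ih =>
    intro ℓ f h1 hch hd
    by_cases hb : f (ℓ - 1) = b
    · exact ⟨ℓ, f, h1, hch, hb⟩
    · obtain ⟨f', -, hch'⟩ := chain_extend hn hcsymm hab hWa hW h1 hch hb
      have hbound := chain_bound hch'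
      exact ih (ℓ + 1) f' (by omega) hch' (by omega)

lemma chain_cover {n : I → ℕ} (hn : ∀ i, 1 ≤ n i) {c : I → I → ℕ}
    (hcsymm : ∀ i j, c i j = c j i)
    (hconn : (SimpleGraph.fromRel (fun i j => 0 < c i j)).Connected)
    {a b : I} (hab : a ≠ b)
    (hWb : Wsum n c b = 1)
    {f : ℕ → I} {ℓ : ℕ} (h1 : 1 ≤ ℓ) (hch : ChainProp n c a b f ℓ)
    (hb : f (ℓ - 1) = b) : ∀ y, ∃ i < ℓ, f i = y := by
  obtain ⟨hhead, hinj, hone, hnotb, hadj, hcl⟩ := hch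
  have hℓ2 : 2 ≤ ℓ := by
    rcases Nat.lt_or_ge ℓ 2 with h | h
    · exfalso
      have : ℓ = 1 := by omega
      subst this
      exact hab (hhead ▸ hb ▸ rfl)
    · exact h
  have hWb' : ∑ j ∈ Finset.univ.erase b, n j * c b j = 1 := hWb
  obtain ⟨j0, hj0mem, hj01, hj00⟩ := aux_sum_one hWb'
  have hcbp : c b (f (ℓ - 2)) = 1 := by
    have := hadj (ℓ - 2) (by omega)
    have e : ℓ - 2 + 1 = ℓ - 1 := by omega
    rw [e, hb] at this
    rw [hcsymm]
    exact this
  have hpb : f (ℓ - 2) ≠ b := by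
    intro h
    have := hinj (ℓ - 2) (by omega) (ℓ - 1) (by omega) (by rw [h, hb])
    omega
  have hj0eq : j0 = f (ℓ - 2) := by
    by_contra hne
    have h0 := hj00 (f (ℓ - 2)) (Finset.mem_erase.mpr ⟨hpb, Finset.mem_univ _⟩)
      (fun h => hne h.symm)
    rw [hcbp] at h0
    have := hn (f (ℓ - 2))
    omega
  have hbcl : ∀ k, k ≠ b → k ≠ f (ℓ - 2) → c b k = 0 := by
    intro k hkb hkp
    have h0 := hj00 k (Finset.mem_erase.mpr ⟨hkb, Finset.mem_univ _⟩) (hj0eq ▸ hkp)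
    rcases Nat.mul_eq_zero.mp h0 with h | h
    · exact absurd h (by have := hn k; omega)
    · exact h
  have hS : ∀ x, (∃ i < ℓ, f i = x) → ∀ y, 0 < c x y → ∃ i < ℓ, f i = y := by
    rintro x ⟨i, hi, rfl⟩ y hy
    rcases lt_or_ge (i + 1) ℓ with h | h
    · by_cases h1' : y = f (i - 1)
      · exact ⟨i - 1, by omega, h1'.symm⟩
      by_cases h2' : y = f i
      · exact ⟨i, hi, h2'.symm⟩
      by_cases h3' : y = f (i + 1)
      · exact ⟨i + 1, by omega, h3'.symm⟩
      · exact absurd (hcl i h y h1' h2' h3') (by omega)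
    · have hieq : i = ℓ - 1 := by omega
      rw [hieq, hb] at hy
      by_cases h1' : y = b
      · exact ⟨ℓ - 1, by omega, h1' ▸ hb⟩
      by_cases h2' : y = f (ℓ - 2)
      · exact ⟨ℓ - 2, by omega, h2'.symm⟩
      · exact absurd (hbcl y h1' h2') (by omega)
  have hwalk : ∀ (u y : I) (p : (SimpleGraph.fromRel (fun i j => 0 < c i j)).Walk u y),
      (∃ i < ℓ, f i = u) → ∃ i < ℓ, f i = y := by
    intro u y p
    induction p with
    | nil => exact id
    | cons h p ih =>
      rename_i u' v' y'
      intro hu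
      apply ih
      rw [SimpleGraph.fromRel_adj] at h
      rcases h.2 with hc | hc
      · exact hS u' hu v' hc
      · exact hS u' hu v' (by rw [hcsymm u' v']; exact hc)
  intro y
  obtain ⟨p⟩ := hconn.preconnected a y
  exact hwalk a y p ⟨0, by omega, hhead⟩

end ChainAux



theorem stmt_9 (I : Type*) [Fintype I] [DecidableEq I]
    (hcard : 2 ≤ Fintype.card I)
    (n : I → ℕ) (hn : ∀ i, 1 ≤ n i)
    (c : I → I → ℕ) (hcsymm : ∀ i j, c i j = c j i)
    (s : I → ℤ) (g : I → ℕ) (κ : I → ℕ)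
    (hadj : ∀ i, 2 * (g i : ℤ) - 2 - s i = -(κ i : ℤ))
    (hfib : ∀ i, (n i : ℤ) * s i + ∑ j ∈ Finset.univ.erase i, (n j : ℤ) * (c i j : ℤ) = 0)
    (hconn : (SimpleGraph.fromRel (fun i j => 0 < c i j)).Connected)
    (a b : I) (hab : a ≠ b) (hκa : κ a = 1) (hκb : κ b = 1)
    (hna : n a = 1) (hnb : n b = 1)
    (hκ : ∀ i, i ≠ a → i ≠ b → κ i = 0) :
    ∃ m : ℕ, Fintype.card I = m + 1 ∧
      ∃ e : Fin (m + 1) ≃ I, e 0 = a ∧ e (Fin.last m) = b ∧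
        (∀ i, n i = 1) ∧ (∀ i, g i = 0) ∧
        (∀ i j : Fin (m + 1), i ≠ j →
          c (e i) (e j) = if (i : ℕ) + 1 = (j : ℕ) ∨ (j : ℕ) + 1 = (i : ℕ) then 1 else 0) ∧
        (∀ i : Fin (m + 1), s (e i) =
          -2 + (if i = 0 then 1 else 0) + (if i = Fin.last m then 1 else 0)) := by
  classical
  have hnbr : ∀ i : I, ∃ j, j ≠ i ∧ 0 < c i j := by
    intro i
    obtain ⟨j, hj⟩ := Fintype.exists_ne_of_one_lt_card (by omega) i
    obtain ⟨p⟩ := hconn.preconnected i j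
    cases p with
    | nil => exact absurd rfl hj
    | cons h q =>
      rename_i v
      rw [SimpleGraph.fromRel_adj] at h
      obtain ⟨hne, hc⟩ := h
      rcases hc with h' | h'
      · exact ⟨v, hne.symm, h'⟩
      · exact ⟨v, hne.symm, by rw [hcsymm i v]; exact h'⟩
  have key : ∀ i, (Wsum n c i : ℤ) = (n i : ℤ) * (2 - 2 * (g i : ℤ) - (κ i : ℤ)) := by
    intro i
    have h1 := hfib i
    have h2 := hadj i
    have hW : (Wsum n c i : ℤ) = ∑ j ∈ Finset.univ.erase i, (n j : ℤ) * (c i j : ℤ) := by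
      unfold Wsum
      push_cast
      rfl
    have hs : s i = 2 * (g i : ℤ) - 2 + (κ i : ℤ) := by linarith
    have hsum2 : ∑ j ∈ Finset.univ.erase i, (n j : ℤ) * (c i j : ℤ) = -((n i : ℤ) * s i) := by
      linarith
    rw [hW, hsum2, hs]
    ring
  have hg : ∀ i, g i = 0 := by
    intro i
    have hk := key i
    rcases eq_or_ne i a with rfl | hia
    · rw [hκa, hna] at hk
      push_cast at hk
      omega
    rcases eq_or_ne i b with rfl | hib
    · rw [hκb, hnb] at hk
      push_cast at hk
      omega
    · rw [hκ i hia hib] at hk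
      push_cast at hk
      by_contra hgi
      have hg1 : (1 : ℤ) ≤ (g i : ℤ) := by
        have := Nat.pos_of_ne_zero hgi
        exact_mod_cast this
      have hncast : (0 : ℤ) ≤ (n i : ℤ) := Nat.cast_nonneg _
      have hWle : (Wsum n c i : ℤ) ≤ 0 := by nlinarith
      have hW0 : Wsum n c i = 0 := by omega
      have hW0' : ∑ j ∈ Finset.univ.erase i, n j * c i j = 0 := hW0
      obtain ⟨j, hji, hcj⟩ := hnbr i
      have h0 := Finset.sum_eq_zero_iff.mp hW0' j
        (Finset.mem_erase.mpr ⟨hji, Finset.mem_univ _⟩)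
      rcases Nat.mul_eq_zero.mp h0 with h | h
      · exact absurd h (by have := hn j; omega)
      · omega
  have hWa : Wsum n c a = 1 := by
    have := key a
    rw [hκa, hna, hg a] at this
    push_cast at this
    omega
  have hWb : Wsum n c b = 1 := by
    have := key b
    rw [hκb, hnb, hg b] at this
    push_cast at this
    omega
  have hWo : ∀ i, i ≠ a → i ≠ b → Wsum n c i = 2 * n i := by
    intro i hia hib
    have := key i
    rw [hκ i hia hib, hg i] at this
    push_cast at this
    omega
  have hs' : ∀ i, s i = (κ i : ℤ) - 2 := by
    intro i
    have := hadj i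
    rw [hg i] at this
    push_cast at this
    linarith
  obtain ⟨ℓ, f, h1, hch, hb⟩ := chain_to_b hn hcsymm hab hna hWa hWo
  have hcover := chain_cover hn hcsymm hconn hab hWb h1 hch hb
  have hbound := chain_bound hch
  obtain ⟨hhead, hinj, hone, hnotb, hadjc, hcl⟩ := hch
  have hℓ2 : 2 ≤ ℓ := by
    rcases Nat.lt_or_ge ℓ 2 with h | h
    · exfalso
      have he1 : ℓ = 1 := by omega
      rw [he1] at hb
      exact hab (by rw [← hhead, ← hb])
    · exact h
  have hcardℓ : Fintype.card I = ℓ := by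
    have hle : Fintype.card I ≤ ℓ := by
      have hsub : Finset.univ ⊆ (Finset.range ℓ).image f := by
        intro y _
        obtain ⟨i, hi, rfl⟩ := hcover y
        exact Finset.mem_image.mpr ⟨i, Finset.mem_range.mpr hi, rfl⟩
      calc Fintype.card I = Finset.univ.card := Finset.card_univ.symm
        _ ≤ ((Finset.range ℓ).image f).card := Finset.card_le_card hsub
        _ ≤ (Finset.range ℓ).card := Finset.card_image_le
        _ = ℓ := Finset.card_range ℓ
    omega
  refine ⟨ℓ - 1, by omega, ?_⟩
  have hm : ℓ - 1 + 1 = ℓ := by omega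
  have hfbij : Function.Bijective (fun i : Fin (ℓ - 1 + 1) => f (i : ℕ)) := by
    constructor
    · intro i j hij
      exact Fin.ext (hinj (i : ℕ) (by have := i.isLt; omega) (j : ℕ)
        (by have := j.isLt; omega) hij)
    · intro y
      obtain ⟨i, hi, rfl⟩ := hcover y
      exact ⟨⟨i, by omega⟩, rfl⟩
  refine ⟨Equiv.ofBijective _ hfbij, ?_, ?_, ?_, hg, ?_, ?_⟩
  · show f ((0 : Fin (ℓ - 1 + 1)) : ℕ) = a
    rw [Fin.val_zero]
    exact hhead
  · show f ((Fin.last (ℓ - 1) : Fin (ℓ - 1 + 1)) : ℕ) = b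
    rw [Fin.val_last]
    exact hb
  · intro i
    obtain ⟨k, hk, rfl⟩ := hcover i
    exact hone k hk
  · have hzero : ∀ p q : ℕ, p + 1 < ℓ → q < ℓ → p + 1 < q → c (f p) (f q) = 0 := by
      intro p q hp hq hpq
      refine hcl p hp (f q) ?_ ?_ ?_
      · intro h
        have := hinj q hq (p - 1) (by omega) h
        omega
      · intro h
        have := hinj q hq p (by omega) h
        omega
      · intro h
        have := hinj q hq (p + 1) (by omega) h
        omega
    intro i j hij
    show c (f (i : ℕ)) (f (j : ℕ)) = _
    have hi' : (i : ℕ) < ℓ := by have := i.isLt; omega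
    have hj' : (j : ℕ) < ℓ := by have := j.isLt; omega
    have hne : (i : ℕ) ≠ (j : ℕ) := fun h => hij (Fin.ext h)
    by_cases h1 : (i : ℕ) + 1 = (j : ℕ)
    · rw [if_pos (Or.inl h1)]
      have := hadjc (i : ℕ) (by omega)
      rw [h1] at this
      exact this
    by_cases h2 : (j : ℕ) + 1 = (i : ℕ)
    · rw [if_pos (Or.inr h2)]
      have := hadjc (j : ℕ) (by omega)
      rw [h2] at this
      rw [hcsymm]
      exact this
    · rw [if_neg (by tauto)]
      rcases Nat.lt_or_ge (i : ℕ) (j : ℕ) with h | h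
      · exact hzero (i : ℕ) (j : ℕ) (by omega) hj' (by omega)
      · rw [hcsymm]
        exact hzero (j : ℕ) (i : ℕ) (by omega) hi' (by omega)
  · intro i
    show s (f (i : ℕ)) = _
    rw [hs']
    by_cases h0 : i = 0
    · subst h0
      have hv : ((0 : Fin (ℓ - 1 + 1)) : ℕ) = 0 := Fin.val_zero _
      rw [hv, hhead, hκa, if_pos rfl, if_neg (by
        intro h
        have := congrArg Fin.val h
        rw [Fin.val_zero, Fin.val_last] at this
        omega)]
      norm_num
    by_cases hl : i = Fin.last (ℓ - 1)
    · subst hl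
      rw [Fin.val_last, hb, hκb, if_neg h0, if_pos rfl]
      norm_num
    · have hfa : f (i : ℕ) ≠ a := by
        intro h
        rw [← hhead] at h
        have := hinj (i : ℕ) (by omega) 0 (by omega) h
        exact h0 (Fin.ext (by rw [Fin.val_zero]; exact this))
      have hfb : f (i : ℕ) ≠ b := by
        intro h
        rw [← hb] at h
        have := hinj (i : ℕ) (by omega) (ℓ - 1) (by omega) h
        exact hl (Fin.ext (by rw [Fin.val_last]; exact this))
      rw [hκ _ hfa hfb, if_neg h0, if_neg hl]
      norm_num
end

section
/- Let I be a finite type with at least 2 elements, equipped with: n : I → ℕ with n i ≥ 1 for all i; a symmetric c : I → I → ℕ; s : I → ℤ; g : I → ℕ; κ : I → ℕ. Assume: (adjunction) for all i, 2(g i) − 2 − s i = −(κ i); (fiber identity) for all i, (n i)(s i) + Σ_{j ≠ i} (n j)(c i j) = 0; (connectedness) the graph on I in which i and j are adjacent iff i ≠ j and c i j > 0 is connected; (boundary) there exists a ∈ I with κ a = 1, n a = 2, and κ i = 0 for every i ≠ a. Then there exists m ≥ 0 such that I has exactly m + 3 elements, and there is a bijection e from {0,1,…,m+2} to I with e(0)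 = a such that: g i = 0 for all i; n(e i) = 2 for 0 ≤ i ≤ m and n(e(m+1)) = n(e(m+2)) = 1; c(e i)(e j) = 1 exactly for the unordered pairs {i, i+1} with 0 ≤ i ≤ m−1 together with {m, m+1} and {m, m+2}, and c(e i)(e j) = 0 for all other pairs with i ≠ j; s(e 0) = −1 and s(e i) = −2 for 1 ≤ i ≤ m+2. -/
open Finset

lemma sum_eq_two_cases {I : Type*} [DecidableEq I] (T : Finset I) (f : I → ℕ)
    (h1 : ∀ y ∈ T, 1 ≤ f y) (h2 : ∑ y ∈ T, f y = 2) :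
    (∃ y, T = {y} ∧ f y = 2) ∨
    (∃ u w, u ≠ w ∧ T = {u, w} ∧ f u = 1 ∧ f w = 1) := by
  have hcard : T.card ≤ 2 := by
    calc T.card = ∑ _y ∈ T, 1 := by simp
    _ ≤ ∑ y ∈ T, f y := Finset.sum_le_sum h1
    _ = 2 := h2
  interval_cases h : T.card
  · rw [Finset.card_eq_zero] at h; subst h; simp at h2
  · rw [Finset.card_eq_one] at h
    obtain ⟨y, rfl⟩ := h
    left; exact ⟨y, rfl, by simpa using h2⟩
  · rw [Finset.card_eq_two] at h
    obtain ⟨u, w, huw, rfl⟩ := h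
    right
    refine ⟨u, w, huw, rfl, ?_, ?_⟩ <;>
    · have := h1 u (by simp); have := h1 w (by simp)
      rw [Finset.sum_pair huw] at h2; omega

lemma neighbor_exists {I : Type*} [Fintype I] [DecidableEq I]
    (hcard : 2 ≤ Fintype.card I) (c : I → I → ℕ) (hcsymm : ∀ i j, c i j = c j i)
    (hconn : (SimpleGraph.fromRel (fun i j => 0 < c i j)).Connected) (i : I) :
    ∃ j, j ≠ i ∧ 0 < c i j := by
  obtain ⟨j, hj⟩ := Fintype.exists_ne_of_one_lt_card hcard i
  obtain ⟨w⟩ := hconn.preconnected i j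
  cases w with
  | nil => exact absurd rfl hj
  | cons h p =>
    rename_i b
    rw [SimpleGraph.fromRel_adj] at h
    refine ⟨b, fun hb => h.1 hb.symm, ?_⟩
    rcases h.2 with h' | h'
    · exact h'
    · rw [hcsymm]; exact h'

lemma stmt10_closure_univ {I : Type*} [Fintype I] [DecidableEq I]
    (c : I → I → ℕ) (hcsymm : ∀ i j, c i j = c j i)
    (hconn : (SimpleGraph.fromRel (fun i j => 0 < c i j)).Connected)
    (a : I) (V : Set I) (ha : a ∈ V)
    (hcl : ∀ x ∈ V, ∀ y, x ≠ y → 0 < c x y → y ∈ V) : ∀ z, z ∈ V := by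
  have key : ∀ (x z : I), (SimpleGraph.fromRel (fun i j => 0 < c i j)).Walk x z →
      x ∈ V → z ∈ V := by
    intro x z w
    induction w with
    | nil => exact id
    | cons h p ih =>
      rename_i b _
      intro hx
      rw [SimpleGraph.fromRel_adj] at h
      refine ih ?_
      rcases h.2 with h' | h'
      · exact hcl _ hx b h.1 h'
      · exact hcl _ hx b h.1 (by rwa [hcsymm])
  intro z
  obtain ⟨w⟩ := hconn.preconnected a z
  exact key a z w ha

def ChainP {I : Type*} (n : I → ℕ) (c : I → I → ℕ) (a : I) (k : ℕ) (v : ℕ → I) : Prop :=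
  v 0 = a ∧
  (∀ i j, i ≤ k → j ≤ k → v i = v j → i = j) ∧
  (∀ i ≤ k, n (v i) = 2) ∧
  (∀ i < k, c (v i) (v (i+1)) = 1) ∧
  (∀ i < k, ∀ y, y ≠ v i → y ≠ v (i+1) → y ≠ v (i-1) → c (v i) y = 0)

lemma stmt10_mul_one {a b : ℕ} (h : a * b = 1) : a = 1 ∧ b = 1 :=
  ⟨Nat.dvd_one.mp ⟨b, h.symm⟩, Nat.dvd_one.mp ⟨a, by rw [mul_comm]; exact h.symm⟩⟩

lemma stmt10_step {I : Type*} [Fintype I] [DecidableEq I]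
    (n : I → ℕ) (c : I → I → ℕ) (a : I)
    (hn : ∀ i, 1 ≤ n i) (hcsymm : ∀ i j, c i j = c j i) (hna : n a = 2)
    (hd : ∀ i, ∑ j ∈ Finset.univ.erase i, n j * c i j = if i = a then 2 else 2 * n i)
    (k : ℕ) (v : ℕ → I) (hv : ChainP n c a k v) :
    (∃ v', ChainP n c a (k+1) v') ∨
    (∃ u w, u ≠ w ∧ (∀ i ≤ k, u ≠ v i) ∧ (∀ i ≤ k, w ≠ v i) ∧
      n u = 1 ∧ n w = 1 ∧ c (v k) u = 1 ∧ c (v k) w = 1 ∧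
      (∀ z, (∀ i ≤ k, z ≠ v i) → z ≠ u → z ≠ w → c (v k) z = 0) ∧
      (∀ z, z ≠ u → z ≠ v k → c u z = 0) ∧
      (∀ z, z ≠ w → z ≠ v k → c w z = 0)) := by
  obtain ⟨hv0, hinj, hn2, hedge, hsat⟩ := hv
  set Fim : Finset I := (Finset.range (k+1)).image v with hFim
  have hmemF : ∀ y : I, y ∈ Fim ↔ ∃ j ≤ k, v j = y := by
    intro y
    simp [hFim, Finset.mem_image, Finset.mem_range, Nat.lt_succ_iff]
  have hxmem : v k ∈ Fim := (hmemF _).2 ⟨k, le_refl k, rfl⟩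
  have hamem : a ∈ Fim := (hmemF _).2 ⟨0, Nat.zero_le k, hv0⟩
  have hnotF_ne_a : ∀ y, y ∉ Fim → y ≠ a := fun y hy h => hy (h ▸ hamem)
  have hvne : ∀ i j, i ≤ k → j ≤ k → i ≠ j → v i ≠ v j := by
    intro i j hi hj hij h
    exact hij (hinj i j hi hj h)
  have hxold : ∀ j, j < k → j + 1 ≠ k → c (v k) (v j) = 0 := by
    intro j hj hj1
    rw [hcsymm]
    refine hsat j hj (v k) ?_ ?_ ?_
    · exact hvne k j (le_refl k) hj.le (by omega)
    · exact hvne k (j+1) (le_refl k) hj (by omega)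
    · exact hvne k (j-1) (le_refl k) (by omega) (by omega)
  have hxa : v k = a ↔ k = 0 := by
    constructor
    · intro h
      exact hinj k 0 (le_refl k) (Nat.zero_le k) (h.trans hv0.symm)
    · intro h; rw [h, hv0]
  have holdsum : ∑ y ∈ Fim.erase (v k), n y * c (v k) y = if k = 0 then 0 else 2 := by
    rcases Nat.eq_zero_or_pos k with hk | hk
    · subst hk
      rw [if_pos rfl]
      have : Fim = {v 0} := by
        ext y; simp [hmemF y, Nat.le_zero, eq_comm]
      rw [this]
      simp
    · rw [if_neg (by omega)]
      rw [Finset.sum_eq_single_of_mem (v (k-1))]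
      · rw [hn2 (k-1) (by omega)]
        have := hedge (k-1) (by omega)
        rw [Nat.sub_add_cancel hk] at this
        rw [hcsymm, this]
      · rw [Finset.mem_erase]
        exact ⟨hvne (k-1) k (by omega) (le_refl k) (by omega),
          (hmemF _).2 ⟨k-1, by omega, rfl⟩⟩
      · intro y hy hyne
        obtain ⟨hy1, hy2⟩ := Finset.mem_erase.1 hy
        obtain ⟨j, hj, rfl⟩ := (hmemF y).1 hy2
        have hjk : j ≠ k := fun h => hy1 (by rw [h])
        have : c (v k) (v j) = 0 := by
          refine hxold j (by omega) ?_
          intro h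
          have hkj : k - 1 = j := by omega
          exact hyne (by rw [hkj])
        simp [this]

  have hnewsum : ∑ y ∈ Finset.univ \ Fim, n y * c (v k) y = 2 := by
    have hsplit : Finset.univ.erase (v k) = (Fim.erase (v k)) ∪ (Finset.univ \ Fim) := by
      ext y
      simp only [Finset.mem_erase, Finset.mem_union, Finset.mem_sdiff, Finset.mem_univ,
        true_and, and_true]
      constructor
      · intro h
        by_cases hyF : y ∈ Fim
        · exact Or.inl ⟨h, hyF⟩
        · exact Or.inr hyF
      · rintro (⟨h, _⟩ | h)
        · exact h
        · exact fun hh => h (hh ▸ hxmem)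
    have hdisj : Disjoint (Fim.erase (v k)) (Finset.univ \ Fim) := by
      refine Finset.disjoint_left.2 ?_
      intro y hy hy'
      exact (Finset.mem_sdiff.1 hy').2 (Finset.mem_of_mem_erase hy)
    have htot := hd (v k)
    rw [hsplit, Finset.sum_union hdisj, holdsum] at htot
    have hnx : n (v k) = 2 := hn2 k (le_refl k)
    rcases Nat.eq_zero_or_pos k with hk | hk
    · rw [if_pos hk, if_pos (hxa.2 hk)] at htot; omega
    · rw [if_neg (by omega), if_neg (fun h => absurd (hxa.1 h) (by omega))] at htot
      omega
  classical
  set T : Finset I := (Finset.univ \ Fim).filter (fun y => 0 < c (v k) y) with hT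
  have hTsub : ∀ y ∈ T, y ∉ Fim ∧ 0 < c (v k) y := by
    intro y hy
    obtain ⟨hy1, hy2⟩ := Finset.mem_filter.1 hy
    exact ⟨(Finset.mem_sdiff.1 hy1).2, hy2⟩
  have hTsum : ∑ y ∈ T, n y * c (v k) y = 2 := by
    rw [hT, Finset.sum_filter_of_ne, hnewsum]
    intro y _ hy
    by_contra h
    push_neg at h
    interval_cases (c (v k) y)
    simp at hy
  have hzero : ∀ z, z ∉ Fim → z ∉ T → c (v k) z = 0 := by
    intro z hz hzT
    by_contra h
    exact hzT (Finset.mem_filter.2 ⟨Finset.mem_sdiff.2 ⟨Finset.mem_univ z, hz⟩, Nat.pos_of_ne_zero h⟩)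
  have hdeg2 : ∀ y, y ∉ Fim → ∑ z ∈ Finset.univ.erase y, n z * c y z = 2 * n y := by
    intro y hy
    rw [hd y, if_neg (hnotF_ne_a y hy)]
  rcases sum_eq_two_cases T (fun y => n y * c (v k) y)
      (fun y hy => Nat.one_le_iff_ne_zero.2 (by
        have h1 := (hTsub y hy).2; have h2 := hn y; positivity)) hTsum with
    ⟨y, hTy, hy2⟩ | ⟨u, w, huw, hTuw, hu1, hw1⟩
  · have hyT : y ∈ T := hTy ▸ Finset.mem_singleton_self y
    have hyF : y ∉ Fim := (hTsub y hyT).1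
    have hdvd : n y ∣ 2 := ⟨c (v k) y, hy2.symm⟩
    have hle : n y ≤ 2 := Nat.le_of_dvd (by norm_num) hdvd
    have hny : n y = 2 ∧ c (v k) y = 1 ∨ n y = 1 ∧ c (v k) y = 2 := by
      have h1 := hn y
      rcases Nat.lt_or_ge (n y) 2 with h | h
      · right
        have hn1 : n y = 1 := by omega
        rw [hn1, Nat.one_mul] at hy2
        exact ⟨hn1, hy2⟩
      · left
        have hn2' : n y = 2 := by omega
        rw [hn2'] at hy2
        exact ⟨hn2', by omega⟩
    rcases hny with ⟨hny2, hcy1⟩ | ⟨hny1, hcy2⟩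
    · left
      refine ⟨fun i => if i ≤ k then v i else y, ?_, ?_, ?_, ?_, ?_⟩
      · simpa using hv0
      · intro i j hi hj hij
        simp only [] at hij
        rcases le_or_gt i k with hik | hik <;> rcases le_or_gt j k with hjk | hjk
        · rw [if_pos hik, if_pos hjk] at hij; exact hinj i j hik hjk hij
        · rw [if_pos hik, if_neg (by omega)] at hij
          exact absurd ((hmemF y).2 ⟨i, hik, hij⟩) hyF
        · rw [if_neg (by omega), if_pos hjk] at hij
          exact absurd ((hmemF y).2 ⟨j, hjk, hij.symm⟩) hyF
        · omega
      · intro i hi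
        simp only []
        rcases le_or_gt i k with hik | hik
        · rw [if_pos hik]; exact hn2 i hik
        · rw [if_neg (by omega)]; exact hny2
      · intro i hi
        simp only []
        rcases Nat.lt_or_ge i k with hik | hik
        · rw [if_pos (by omega : i ≤ k), if_pos (by omega : i + 1 ≤ k)]
          exact hedge i hik
        · have hik' : i = k := by omega
          rw [hik', if_pos (le_refl k), if_neg (by omega)]
          exact hcy1
      · intro i hi z hz1 hz2 hz3
        simp only [] at hz1 hz2 hz3 ⊢
        rcases Nat.lt_or_ge i k with hik | hik
        · rw [if_pos (by omega : i ≤ k)] at hz1 ⊢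
          rw [if_pos (by omega : i + 1 ≤ k)] at hz2
          rw [if_pos (by omega : i - 1 ≤ k)] at hz3
          exact hsat i hik z hz1 hz2 hz3
        · have hik' : i = k := by omega
          rw [hik'] at hz1 hz2 hz3 ⊢
          rw [if_pos (le_refl k)] at hz1 ⊢
          rw [if_neg (by omega)] at hz2
          rw [if_pos (by omega : k - 1 ≤ k)] at hz3
          by_cases hzF : z ∈ Fim
          · obtain ⟨j, hj, rfl⟩ := (hmemF z).1 hzF
            have hjk : j ≠ k := fun h => hz1 (by rw [h])
            refine hxold j (by omega) ?_
            intro h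
            have hkj : k - 1 = j := by omega
            exact hz3 (by rw [hkj])
          · refine hzero z hzF ?_
            intro hzT
            have hmem1 : z ∈ ({y} : Finset I) := hTy ▸ hzT
            exact hz2 (Finset.mem_singleton.1 hmem1)
    · exfalso
      have h4 : n (v k) * c y (v k) ≤ ∑ z ∈ Finset.univ.erase y, n z * c y z := by
        refine Finset.single_le_sum (f := fun z => n z * c y z) (fun z _ => Nat.zero_le _) ?_
        rw [Finset.mem_erase]
        exact ⟨fun h => hyF (h ▸ hxmem), Finset.mem_univ _⟩
      rw [hdeg2 y hyF] at h4
      rw [hn2 k (le_refl k), hcsymm y (v k), hcy2, hny1] at h4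
      omega
  · right
    have huT : u ∈ T := hTuw ▸ Finset.mem_insert_self u _
    have hwT : w ∈ T := hTuw ▸ Finset.mem_insert_of_mem (Finset.mem_singleton_self w)
    have huF : u ∉ Fim := (hTsub u huT).1
    have hwF : w ∉ Fim := (hTsub w hwT).1
    obtain ⟨hnu, hcu⟩ := stmt10_mul_one hu1
    obtain ⟨hnw, hcw⟩ := stmt10_mul_one hw1
    have husatgen : ∀ u₀, u₀ ∉ Fim → n u₀ = 1 → c (v k) u₀ = 1 →
        ∀ z, z ≠ u₀ → z ≠ v k → c u₀ z = 0 := by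
      intro u₀ hu₀F hnu₀ hcu₀ z hz1 hz2
      have hdu := hdeg2 u₀ hu₀F
      rw [hnu₀, Nat.mul_one] at hdu
      have hxmem' : v k ∈ Finset.univ.erase u₀ :=
        Finset.mem_erase.2 ⟨fun h => hu₀F (h ▸ hxmem), Finset.mem_univ _⟩
      have hterm : n (v k) * c u₀ (v k) = 2 := by
        rw [hn2 k (le_refl k), hcsymm u₀ (v k), hcu₀]
      have hrest : ∑ z' ∈ (Finset.univ.erase u₀).erase (v k), n z' * c u₀ z' = 0 := by
        have hx2 := Finset.add_sum_erase _ (fun z' => n z' * c u₀ z') hxmem'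
        omega
      have hzmem : z ∈ (Finset.univ.erase u₀).erase (v k) :=
        Finset.mem_erase.2 ⟨hz2, Finset.mem_erase.2 ⟨hz1, Finset.mem_univ _⟩⟩
      have h0 := (Finset.sum_eq_zero_iff.1 hrest) z hzmem
      have h1 := hn z
      by_contra h
      have h2 : 1 ≤ c u₀ z := Nat.pos_of_ne_zero h
      nlinarith
    refine ⟨u, w, huw, ?_, ?_, hnu, hnw, hcu, hcw, ?_, ?_, ?_⟩
    · intro i hi h; exact huF ((hmemF u).2 ⟨i, hi, h.symm⟩)
    · intro i hi h; exact hwF ((hmemF w).2 ⟨i, hi, h.symm⟩)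
    · intro z hz hzu hzw
      refine hzero z (fun hzF => ?_) (fun hzT => ?_)
      · obtain ⟨j, hj, rfl⟩ := (hmemF z).1 hzF
        exact hz j hj rfl
      · have hmem2 : z ∈ ({u, w} : Finset I) := hTuw ▸ hzT
        rcases Finset.mem_insert.1 hmem2 with h | h
        · exact hzu h
        · exact hzw (Finset.mem_singleton.1 h)
    · exact husatgen u huF hnu hcu
    · exact husatgen w hwF hnw hcw


theorem stmt_10 (I : Type*) [Fintype I] [DecidableEq I]
    (hcard : 2 ≤ Fintype.card I)
    (n : I → ℕ) (hn : ∀ i, 1 ≤ n i)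
    (c : I → I → ℕ) (hcsymm : ∀ i j, c i j = c j i)
    (s : I → ℤ) (g : I → ℕ) (κ : I → ℕ)
    (hadj : ∀ i, 2 * (g i : ℤ) - 2 - s i = -(κ i : ℤ))
    (hfib : ∀ i, (n i : ℤ) * s i + ∑ j ∈ Finset.univ.erase i, (n j : ℤ) * (c i j : ℤ) = 0)
    (hconn : (SimpleGraph.fromRel (fun i j => 0 < c i j)).Connected)
    (a : I) (hκa : κ a = 1) (hna : n a = 2)
    (hκ : ∀ i, i ≠ a → κ i = 0) :
    ∃ m : ℕ, Fintype.card I = m + 3 ∧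
      ∃ e : Fin (m + 3) ≃ I, e 0 = a ∧
        (∀ i, g i = 0) ∧
        (∀ i : Fin (m + 3), n (e i) = if (i : ℕ) ≤ m then 2 else 1) ∧
        (∀ i j : Fin (m + 3), i ≠ j →
          c (e i) (e j) =
            if ((i : ℕ) + 1 = (j : ℕ) ∧ (i : ℕ) ≤ m) ∨
                ((j : ℕ) + 1 = (i : ℕ) ∧ (j : ℕ) ≤ m) ∨
                ((i : ℕ) = m ∧ (j : ℕ) = m + 2) ∨
                ((j : ℕ) = m ∧ (i : ℕ) = m + 2)
            then 1 else 0) ∧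
        (∀ i : Fin (m + 3), s (e i) = if (i : ℕ) = 0 then -1 else -2) := by
  classical
  have hs : ∀ i, s i = (κ i : ℤ) - 2 ∧ g i = 0 := by
    intro i
    obtain ⟨j, hj, hcj⟩ := neighbor_exists hcard c hcsymm hconn i
    have hfi := hfib i
    have hpos : 0 < ∑ j ∈ Finset.univ.erase i, (n j : ℤ) * (c i j : ℤ) := by
      refine Finset.sum_pos' (fun z _ => by positivity) ⟨j, Finset.mem_erase.2 ⟨hj, Finset.mem_univ _⟩, ?_⟩
      have h1 : (1:ℤ) ≤ (n j : ℤ) := by exact_mod_cast hn j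
      have h2 : (1:ℤ) ≤ (c i j : ℤ) := by exact_mod_cast hcj
      nlinarith
    have hni : (1:ℤ) ≤ (n i : ℤ) := by exact_mod_cast hn i
    have hsneg : s i < 0 := by nlinarith
    have hadji := hadj i
    constructor <;> omega
  have hg0 : ∀ i, g i = 0 := fun i => (hs i).2
  have hsa : s a = -1 := by have := (hs a).1; rw [hκa] at this; omega
  have hsne : ∀ i, i ≠ a → s i = -2 := by
    intro i hi; have := (hs i).1; rw [hκ i hi] at this; omega
  have hd : ∀ i, ∑ j ∈ Finset.univ.erase i, n j * c i j = if i = a then 2 else 2 * n i := by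
    intro i
    have hfi := hfib i
    have hcast : ((∑ j ∈ Finset.univ.erase i, n j * c i j : ℕ) : ℤ)
        = ∑ j ∈ Finset.univ.erase i, (n j : ℤ) * (c i j : ℤ) := by
      push_cast
      rfl
    by_cases hia : i = a
    · subst hia
      rw [if_pos rfl]
      rw [hsa, ← hcast] at hfi
      have hna' := hna
      omega
    · rw [if_neg hia]
      rw [hsne i hia] at hfi
      rw [← hcast] at hfi
      omega
  have hbase : ChainP n c a 0 (fun _ => a) := by
    refine ⟨rfl, fun i j hi hj _ => by omega, fun i hi => ?_, fun i hi => by omega, fun i hi => by omega⟩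
    simpa using hna
  have hbound : ∀ k, (∃ v, ChainP n c a k v) → k + 1 ≤ Fintype.card I := by
    rintro k ⟨v, _, hinj, _, _, _⟩
    have hcd : ((Finset.range (k+1)).image v).card = k + 1 := by
      rw [Finset.card_image_of_injOn, Finset.card_range]
      intro i hi j hj hij
      exact hinj i j (Nat.lt_succ_iff.1 (Finset.mem_range.1 hi))
        (Nat.lt_succ_iff.1 (Finset.mem_range.1 hj)) hij
    calc k + 1 = ((Finset.range (k+1)).image v).card := hcd.symm
    _ ≤ (Finset.univ : Finset I).card := Finset.card_le_card (Finset.subset_univ _)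
    _ = Fintype.card I := rfl
  have hmaxex : ∃ m, (∃ v, ChainP n c a m v) ∧ ¬ (∃ v, ChainP n c a (m+1) v) := by
    by_contra h
    push_neg at h
    have hall : ∀ k, ∃ v, ChainP n c a k v := by
      intro k
      induction k with
      | zero => exact ⟨_, hbase⟩
      | succ k ih => exact h k ih
    have := hbound (Fintype.card I) (hall _)
    omega
  obtain ⟨m, ⟨v, hv⟩, hmax⟩ := hmaxex
  rcases stmt10_step n c a hn hcsymm hna hd m v hv with hext | ⟨u, w, huw, huv, hwv, hnu, hnw, hcu, hcw, hsatx, husat, hwsat⟩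
  · exact absurd hext hmax
  obtain ⟨hv0, hinj, hn2, hedge, hsat⟩ := hv
  -- assemble
  have hvne2 : ∀ i j, i ≤ m → j ≤ m → i ≠ j → v i ≠ v j := fun i j hi hj hij h => hij (hinj i j hi hj h)
  set e0 : Fin (m+3) → I :=
    fun i => if (i:ℕ) ≤ m then v (i:ℕ) else if (i:ℕ) = m+1 then u else w with he0
  have hval : ∀ i : Fin (m+3), ((i:ℕ) ≤ m ∧ e0 i = v (i:ℕ)) ∨ ((i:ℕ) = m+1 ∧ e0 i = u) ∨
      ((i:ℕ) = m+2 ∧ e0 i = w) := by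
    intro i
    have hi3 : (i:ℕ) < m+3 := i.isLt
    by_cases h1 : (i:ℕ) ≤ m
    · left; exact ⟨h1, by simp [he0, h1]⟩
    · by_cases h2 : (i:ℕ) = m+1
      · right; left; exact ⟨h2, by simp [he0, h1, h2]⟩
      · right; right
        have h3 : (i:ℕ) = m+2 := by omega
        exact ⟨h3, by simp [he0, h1, h2]⟩
  have he0j : ∀ j:ℕ, (hj : j ≤ m) → e0 ⟨j, by omega⟩ = v j := by intro j hj; simp [he0, hj]
  have he0u : e0 ⟨m+1, by omega⟩ = u := by simp [he0]
  have he0w : e0 ⟨m+2, by omega⟩ = w := by simp [he0]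
  have hinj0 : Function.Injective e0 := by
    intro i j h
    apply Fin.ext
    rcases hval i with ⟨hi, hei⟩ | ⟨hi, hei⟩ | ⟨hi, hei⟩ <;>
      rcases hval j with ⟨hj, hej⟩ | ⟨hj, hej⟩ | ⟨hj, hej⟩ <;> rw [hei, hej] at h
    · exact hinj _ _ hi hj h
    · exact absurd h.symm (huv _ hi)
    · exact absurd h.symm (hwv _ hi)
    · exact absurd h (huv _ hj)
    · omega
    · exact absurd h huw
    · exact absurd h (hwv _ hj)
    · exact absurd h.symm huw
    · omega
  have hnotr : ∀ y : I, y ∉ Set.range e0 → (∀ j, j ≤ m → y ≠ v j) ∧ y ≠ u ∧ y ≠ w := by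
    intro y hy
    refine ⟨fun j hj h => hy ⟨⟨j, by omega⟩, by rw [he0j j hj, h]⟩,
      fun h => hy ⟨⟨m+1, by omega⟩, by rw [he0u, h]⟩,
      fun h => hy ⟨⟨m+2, by omega⟩, by rw [he0w, h]⟩⟩
  have hsurj : ∀ z : I, z ∈ Set.range e0 := by
    refine stmt10_closure_univ c hcsymm hconn a _ ⟨⟨0, by omega⟩, ?_⟩ ?_
    · rw [he0j 0 (Nat.zero_le m)]; exact hv0
    · intro x hx y hxy hcxy
      by_contra hy
      obtain ⟨hyv, hyu, hyw⟩ := hnotr y hy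
      obtain ⟨i, rfl⟩ := hx
      rcases hval i with ⟨hi, hei⟩ | ⟨hi, hei⟩ | ⟨hi, hei⟩
      · rw [hei] at hxy hcxy
        rcases Nat.lt_or_ge (i:ℕ) m with him | him
        · exact absurd (hsat _ him y (fun h => hxy h.symm) (hyv _ (by omega)) (hyv _ (by omega)))
            (by omega)
        · have him' : (i:ℕ) = m := by omega
          rw [him'] at hcxy
          exact absurd (hsatx y hyv hyu hyw) (by omega)
      · rw [hei] at hxy hcxy
        exact absurd (husat y (fun h => hxy h.symm) (hyv m (le_refl m))) (by omega)
      · rw [hei] at hxy hcxy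
        exact absurd (hwsat y (fun h => hxy h.symm) (hyv m (le_refl m))) (by omega)
  have hbij : Function.Bijective e0 := ⟨hinj0, fun z => hsurj z⟩
  have hE : ∀ i, (Equiv.ofBijective e0 hbij) i = e0 i := fun i => rfl
  refine ⟨m, ?_, Equiv.ofBijective e0 hbij, ?_, hg0, ?_, ?_, ?_⟩
  · rw [← Fintype.card_congr (Equiv.ofBijective e0 hbij), Fintype.card_fin]
  · rw [hE 0]
    have h00 : ((0 : Fin (m+3)) : ℕ) = 0 := rfl
    have := he0j 0 (Nat.zero_le m)
    rw [show (0 : Fin (m+3)) = ⟨0, by omega⟩ from rfl, this]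
    exact hv0
  · intro i
    rw [hE i]
    rcases hval i with ⟨hi, hei⟩ | ⟨hi, hei⟩ | ⟨hi, hei⟩
    · rw [hei, if_pos hi]; exact hn2 _ hi
    · rw [hei, if_neg (by omega)]; exact hnu
    · rw [hei, if_neg (by omega)]; exact hnw
  · have hc' : ∀ i j : Fin (m+3), (i:ℕ) < (j:ℕ) →
        c (e0 i) (e0 j) = if ((j:ℕ) = (i:ℕ)+1 ∧ (i:ℕ) ≤ m) ∨ ((i:ℕ) = m ∧ (j:ℕ) = m+2)
          then 1 else 0 := by
      intro i j hij
      have hi3 : (i:ℕ) < m+3 := i.isLt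
      have hj3 : (j:ℕ) < m+3 := j.isLt
      rcases hval i with ⟨hi, hei⟩ | ⟨hi, hei⟩ | ⟨hi, hei⟩ <;>
        rcases hval j with ⟨hj, hej⟩ | ⟨hj, hej⟩ | ⟨hj, hej⟩ <;> rw [hei, hej]
      · by_cases hadj1 : (j:ℕ) = (i:ℕ)+1
        · rw [if_pos (Or.inl ⟨hadj1, hi⟩), hadj1]
          exact hedge _ (by omega)
        · rw [if_neg (by omega)]
          exact hsat (i:ℕ) (by omega) _ (hvne2 _ _ hj hi (by omega))
            (hvne2 _ _ hj (by omega) (by omega)) (hvne2 _ _ hj (by omega) (by omega))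
      · by_cases him : (i:ℕ) = m
        · rw [if_pos (Or.inl ⟨by omega, hi⟩), him]
          exact hcu
        · rw [if_neg (by omega)]
          exact hsat (i:ℕ) (by omega) u (huv _ hi) (huv _ (by omega)) (huv _ (by omega))
      · by_cases him : (i:ℕ) = m
        · rw [if_pos (Or.inr ⟨him, hj⟩), him]
          exact hcw
        · rw [if_neg (by omega)]
          exact hsat (i:ℕ) (by omega) w (hwv _ hi) (hwv _ (by omega)) (hwv _ (by omega))
      · exact absurd hij (by omega)
      · exact absurd hij (by omega)
      · rw [if_neg (by omega)]
        exact husat w huw.symm (hwv m (le_refl m))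
      · exact absurd hij (by omega)
      · exact absurd hij (by omega)
      · exact absurd hij (by omega)
    intro i j hne
    have hijne : (i:ℕ) ≠ (j:ℕ) := fun h => hne (Fin.ext h)
    rw [hE i, hE j]
    rcases Nat.lt_or_ge (i:ℕ) (j:ℕ) with h | h
    · rw [hc' i j h]
      split_ifs <;> omega
    · have h' : (j:ℕ) < (i:ℕ) := by omega
      rw [hcsymm, hc' j i h']
      split_ifs <;> omega
  · intro i
    rw [hE i]
    by_cases h0 : (i:ℕ) = 0
    · rw [if_pos h0]
      have hia : e0 i = a := by
        rcases hval i with ⟨hi, hei⟩ | ⟨hi, hei⟩ | ⟨hi, hei⟩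
        · rw [hei, h0]; exact hv0
        · omega
        · omega
      rw [hia]; exact hsa
    · rw [if_neg h0]
      apply hsne
      intro h
      have ha0 : a = e0 ⟨0, by omega⟩ := by rw [he0j 0 (Nat.zero_le m)]; exact hv0.symm
      have := hinj0 (h.trans ha0)
      rw [this] at h0
      exact h0 rfl
end

section
/- Let k ≥ 1, let P₁, …, P_k, z, x, y, q, r be complex numbers with z ≠ 0. Set C = ∏_{α=1}^{k}(−P_α) and p = zr + C, and assume p² − z q² = ∏_{α=1}^{k}(P_α² − z). Then the equality ((zr + (−i)^k z y)/2 + C)·((r − (−i)^k y)/2) = ((q + (−i)^k x)/2)·((q − (−i)^k x)/2) holds if and only if x² − z y² = (1/(−z))·(∏_{α=1}^{k}(z − P_α²) − ∏_{α=1}^{k}(−P_α²)) + 2(∏_{α=1}^{k}(−iP_α))·y. -/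
lemma pneg (k : ℕ) (f : Fin k → ℂ) : ∏ α, (-f α) = (-1)^k * ∏ α, f α := by
  calc ∏ α, (-f α) = ∏ α, ((-1) * f α) := by simp
    _ = (∏ _α : Fin k, (-1:ℂ)) * ∏ α, f α := Finset.prod_mul_distrib
    _ = (-1)^k * ∏ α, f α := by simp

theorem stmt_17 (k : ℕ) (hk : 1 ≤ k) (P : Fin k → ℂ) (z x y q r : ℂ) (hz : z ≠ 0)
    (hpq : (z * r + ∏ α, (-P α)) ^ 2 - z * q ^ 2 = ∏ α, (P α ^ 2 - z)) :
    (((z * r + (-Complex.I) ^ k * z * y) / 2 + ∏ α, (-P α)) *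
          ((r - (-Complex.I) ^ k * y) / 2) =
        ((q + (-Complex.I) ^ k * x) / 2) * ((q - (-Complex.I) ^ k * x) / 2)) ↔
      x ^ 2 - z * y ^ 2 =
        1 / (-z) * ((∏ α, (z - P α ^ 2)) - ∏ α, (-P α ^ 2)) +
          2 * (∏ α, (-Complex.I * P α)) * y := by
  have hε : ((-Complex.I) ^ k) ^ 2 = (-1 : ℂ) ^ k := by
    rw [← pow_mul, mul_comm, pow_mul]; norm_num
  have hε4 : ((-Complex.I) ^ k) ^ 4 = 1 := by
    have h4' : (-Complex.I) ^ 4 = 1 := by simp [pow_succ, Complex.I_mul_I]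
    rw [← pow_mul, mul_comm, pow_mul, h4', one_pow]
  have h1 : ∏ α, (z - P α ^ 2) = (-1 : ℂ) ^ k * ∏ α, (P α ^ 2 - z) := by
    have := pneg k (fun α => P α ^ 2 - z); simp only [neg_sub] at this; exact this
  have h2 : ∏ α, (-P α ^ 2) = (-1 : ℂ) ^ k * (∏ α, P α) ^ 2 := by
    have := pneg k (fun α => P α ^ 2)
    rw [this, Finset.prod_pow]
  have h3 : ∏ α, (-Complex.I * P α) = (-Complex.I) ^ k * ∏ α, P α := by
    rw [Finset.prod_mul_distrib]; simp
  have hA : ∏ α, (-P α) = (-1 : ℂ) ^ k * ∏ α, P α := pneg k P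
  rw [hA, ← hε] at hpq
  rw [h1, h2, h3, hA, ← hε]
  have hneg : (-z) ≠ 0 := neg_ne_zero.mpr hz
  set ε := (-Complex.I) ^ k with hεdef
  set B := ∏ α, P α with hB
  set D := ∏ α, (P α ^ 2 - z) with hD
  clear_value ε B D
  constructor
  · intro h
    field_simp
    linear_combination (4 * ε ^ 2 * z) * h - ε ^ 2 * hpq -
      (z * x ^ 2 - z ^ 2 * y ^ 2 - ε ^ 2 * B ^ 2 - 2 * ε * B * z * y) * hε4
  · intro h
    field_simp at h
    have key : z * (((z * r + ε * z * y) / 2 + ε ^ 2 * B) * ((r - ε * y) / 2)) =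
        z * ((q + ε * x) / 2 * ((q - ε * x) / 2)) := by
      linear_combination (ε ^ 4 / 4) * hpq + (ε ^ 2 / 4) * h +
        ((ε ^ 2 * (z * x ^ 2 - z ^ 2 * y ^ 2 - ε ^ 2 * B ^ 2 - 2 * ε * B * z * y) -
          z * (z * r ^ 2 - ε ^ 2 * z * y ^ 2 + 2 * ε ^ 2 * B * r - 2 * ε ^ 3 * B * y -
            q ^ 2 + ε ^ 2 * x ^ 2)) / 4) * hε4
    exact mul_left_cancel₀ hz key
end
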